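/- arXiv:2301.07404 — 10 statements merged into one kernel-verified Lean document; each statement's English description precedes it below -/
import Mathlib

section
/- Let X be an r-ample simplicial complex and let σ be a k-dimensional simplex of X (i.e., |σ| = k+1) with k + 1 < r. Then the link Lk_X(σ) of σ in X is an (r−k−1)-ample simplicial complex. -/
/-- An abstract simplicial complex on vertex type `V`: a collection of nonempty
finite subsets (simplexes) closed under passing to nonempty subsets.  The vertex
set is the set of `v` with `{v}` a simplex. -/
structure SComplex (V : Type*) where
  faces : Set (Finset V)
  nonempty_of_mem : ∀ ⦃σ : Finset V⦄, σ ∈ faces → σ.Nonempty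
  down_closed : ∀ ⦃σ : Finset V⦄, σ ∈ faces → ∀ ⦃τ : Finset V⦄, τ ⊆ σ → τ.Nonempty → τ ∈ faces

namespace SComplex

variable {V W : Type*}

/-- The vertex set of a simplicial complex. -/
def verts (X : SComplex V) : Set V := {v | {v} ∈ X.faces}

/-- The set of faces of the induced subcomplex `X_U`. -/
def induced (X : SComplex V) (U : Set V) : Set (Finset V) :=
  {σ | σ ∈ X.faces ∧ (σ : Set V) ⊆ U}

/-- The induced subcomplex `X_U`, as a simplicial complex. -/
def inducedSub (X : SComplex V) (U : Set V) : SComplex V where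
  faces := X.induced U
  nonempty_of_mem := fun _ h => X.nonempty_of_mem h.1
  down_closed := fun _ h _ hτ hne =>
    ⟨X.down_closed h.1 hτ hne, Set.Subset.trans (Finset.coe_subset.mpr hτ) h.2⟩

/-- The link of a vertex `v`: simplexes `σ` with `v ∉ σ` and `σ ∪ {v} ∈ X`. -/
def link [DecidableEq V] (X : SComplex V) (v : V) : Set (Finset V) :=
  {σ | σ ∈ X.faces ∧ v ∉ σ ∧ insert v σ ∈ X.faces}

/-- The link of a simplex `σ`: simplexes `τ` with `τ ∩ σ = ∅` and `τ ∪ σ ∈ X`. -/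
def linkSimplex [DecidableEq V] (X : SComplex V) (σ : Finset V) : SComplex V where
  faces := {τ | τ ∈ X.faces ∧ Disjoint τ σ ∧ τ ∪ σ ∈ X.faces}
  nonempty_of_mem := fun _ h => X.nonempty_of_mem h.1
  down_closed := by
    intro τ hτ ρ hρ hne
    refine ⟨X.down_closed hτ.1 hρ hne, Finset.disjoint_of_subset_left hρ hτ.2.1, ?_⟩
    exact X.down_closed hτ.2.2 (Finset.union_subset_union_left hρ)
      (hne.mono Finset.subset_union_left)

/-- A downward closed family of finite sets (a subcomplex, when contained in a complex). -/
def DownClosed (A : Set (Finset V)) : Prop :=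
  ∀ ⦃σ : Finset V⦄, σ ∈ A → ∀ ⦃τ : Finset V⦄, τ ⊆ σ → τ.Nonempty → τ ∈ A

/-- `X` is `r`-ample: `X` is nonempty and for every `U ⊆ V(X)` with `|U| ≤ r` and every
subcomplex `A ⊆ X_U` there is a vertex `v ∈ V(X) \ U` with `Lk_X(v) ∩ X_U = A`. -/
def Ample [DecidableEq V] (X : SComplex V) (r : ℕ) : Prop :=
  X.faces.Nonempty ∧
  ∀ U : Finset V, (U : Set V) ⊆ X.verts → U.card ≤ r →
    ∀ A : Set (Finset V), A ⊆ X.induced (U : Set V) → DownClosed A →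
      ∃ v ∈ X.verts, v ∉ U ∧ X.link v ∩ X.induced (U : Set V) = A

/-- An embedding of `A` into `X`: an isomorphism of `A` onto an induced subcomplex of `X`,
recorded as a vertex map injective on `V(A)` such that a set of vertexes of `A` is a
simplex of `A` iff its image is a simplex of `X`. -/
def IsEmbedding [DecidableEq V] (f : W → V) (A : SComplex W) (X : SComplex V) : Prop :=
  Set.InjOn f A.verts ∧
  ∀ σ : Finset W, (σ : Set W) ⊆ A.verts → (σ ∈ A.faces ↔ σ.image f ∈ X.faces)

/-- An isomorphism of `A` onto `X`: a bijection of vertex sets carrying simplexes to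
simplexes in both directions. -/
def IsIso [DecidableEq V] (f : W → V) (A : SComplex W) (X : SComplex V) : Prop :=
  Set.BijOn f A.verts X.verts ∧
  ∀ σ : Finset W, (σ : Set W) ⊆ A.verts → (σ ∈ A.faces ↔ σ.image f ∈ X.faces)

/-- The complex obtained from `X` by removing a set `𝓕` of simplexes: all faces of `X`
containing no member of `𝓕` as a subset. -/
def remove (X : SComplex V) (𝓕 : Set (Finset V)) : SComplex V where
  faces := {σ | σ ∈ X.faces ∧ ∀ τ ∈ 𝓕, ¬ τ ⊆ σ}
  nonempty_of_mem := fun _ h => X.nonempty_of_mem h.1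
  down_closed := fun _ hσ _ hρ hne =>
    ⟨X.down_closed hσ.1 hρ hne, fun τ hτ hsub => hσ.2 τ hτ (hsub.trans hρ)⟩

/-- `M'(r)`: the number of simplicial complexes (including the empty complex) with vertex
set contained in a fixed `r`-element set. -/
noncomputable def Mprime (r : ℕ) : ℕ :=
  Nat.card {A : Set (Finset (Fin r)) // (∀ σ ∈ A, σ.Nonempty) ∧ DownClosed A}

/-- The 1-skeleton of a complex, as a simple graph on the ambient vertex type. -/
def skeletonGraph [DecidableEq V] (Y : SComplex V) : SimpleGraph V where
  Adj u v := u ≠ v ∧ ({u, v} : Finset V) ∈ Y.faces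
  symm := ⟨fun u v h => ⟨h.1.symm, by rw [Finset.pair_comm]; exact h.2⟩⟩
  loopless := ⟨fun v h => h.1 rfl⟩

/-- The vertexes spanned by a family of simplexes. -/
def vertsOf (L : Set (Finset V)) : Set V := ⋃ σ ∈ L, (σ : Set V)

/-- `X` is `r`-conic: `X` is nonempty and every subcomplex `L ⊆ X` with at most `r`
vertexes is contained in the closed star of some vertex of `X`. -/
def Conic [DecidableEq V] (X : SComplex V) (r : ℕ) : Prop :=
  X.faces.Nonempty ∧
  ∀ L : Set (Finset V), L ⊆ X.faces → DownClosed L →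
    (vertsOf L).Finite → (vertsOf L).ncard ≤ r →
      ∃ v ∈ X.verts, ∀ σ ∈ L, insert v σ ∈ X.faces

/-- The intersection `⋂ᵢ St_K(vᵢ)` of the closed stars of the vertexes `v i`,
as a simplicial complex. -/
def starsInter [DecidableEq V] (K : SComplex V) {t : ℕ} (v : Fin t → V) : SComplex V where
  faces := {σ | σ ∈ K.faces ∧ ∀ i, insert (v i) σ ∈ K.faces}
  nonempty_of_mem := fun _ h => K.nonempty_of_mem h.1
  down_closed := fun _ hσ _ hρ hne =>
    ⟨K.down_closed hσ.1 hρ hne, fun i =>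
      K.down_closed (hσ.2 i) (Finset.insert_subset_insert _ hρ)
        ⟨v i, Finset.mem_insert_self _ _⟩⟩

end SComplex

/-- The set `Q_{n,p} = {gᵃ : a ≡ β² mod p for some integer β}` in a finite field. -/
def paleyQ {F : Type*} [Field F] (p : ℕ) (g : Fˣ) : Set F :=
  {x | ∃ α : ℤ, (∃ β : ℤ, (p : ℤ) ∣ α - β ^ 2) ∧ x = ((g ^ α : Fˣ) : F)}

/-- The product `∏_{i<j} (e i - e j)` over all pairs from an enumeration `e`. -/
def pairProd {F : Type*} [Field F] {k : ℕ} (e : Fin k → F) : F :=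
  ∏ q ∈ Finset.univ.filter (fun q : Fin k × Fin k => q.1 < q.2), (e q.1 - e q.2)

/-- The Iterated Paley simplicial complex `X_{n,p}`: vertex set `F = 𝔽_n`, and a nonempty
finite set is a simplex iff for every subset with at least two elements, the product of
the pairwise differences (in any enumeration) lies in `Q_{n,p}`. -/
def paleyComplex (F : Type*) [Field F] [DecidableEq F] (p : ℕ) (g : Fˣ) : SComplex F where
  faces := {σ | σ.Nonempty ∧ ∀ τ ⊆ σ, 2 ≤ τ.card →
    ∀ e : Fin τ.card → F, Function.Injective e → Finset.image e Finset.univ = τ →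
      pairProd e ∈ paleyQ p g}
  nonempty_of_mem := fun _ h => h.1
  down_closed := fun _ hσ _ hτ hne => ⟨hne, fun ρ hρ => hσ.2 ρ (hρ.trans hτ)⟩

open SComplex in
/-- the link of a `k`-dimensional simplex of an `r`-ample complex
is `(r-k-1)`-ample. -/
theorem stmt1 {V : Type*} [DecidableEq V] (X : SComplex V) (r k : ℕ)
    (hX : X.Ample r) (σ : Finset V) (hσ : σ ∈ X.faces) (hcard : σ.card = k + 1)
    (hk : k + 1 < r) :
    (X.linkSimplex σ).Ample (r - k - 1) := by
  classical
  obtain ⟨hXne, hamp⟩ := hX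
  have hσverts : (σ : Set V) ⊆ X.verts := fun u hu =>
    X.down_closed hσ (Finset.singleton_subset_iff.mpr hu) ⟨u, Finset.mem_singleton_self u⟩
  set L := X.linkSimplex σ with hLdef
  constructor
  · -- nonemptiness of the link
    have hdc : DownClosed (X.induced (σ : Set V)) := fun ρ hρ τ hτ hne =>
      ⟨X.down_closed hρ.1 hτ hne, (Finset.coe_subset.mpr hτ).trans hρ.2⟩
    obtain ⟨v, hv, hvσ, heq⟩ := hamp σ hσverts (by omega) _ (le_refl _) hdc
    have hσmem : σ ∈ X.link v ∩ X.induced (σ : Set V) := by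
      rw [heq]; exact ⟨hσ, le_refl _⟩
    refine ⟨{v}, hv, ?_, ?_⟩
    · simp [Finset.disjoint_singleton_left, hvσ]
    · have h1 : insert v σ ∈ X.faces := hσmem.1.2.2
      rwa [Finset.insert_eq] at h1
  · intro U hU hUcard A hA hAdc
    -- the join of A with the full subcomplex on σ
    set A' : Set (Finset V) :=
      {ρ | ρ.Nonempty ∧ (ρ : Set V) ⊆ ↑(U ∪ σ) ∧ (ρ \ σ = ∅ ∨ ρ \ σ ∈ A)} with hA'def
    have hUverts : (U : Set V) ⊆ X.verts := fun u hu => (hU hu).1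
    have hU'verts : ((U ∪ σ : Finset V) : Set V) ⊆ X.verts := by
      rw [Finset.coe_union]; exact Set.union_subset hUverts hσverts
    have hU'card : (U ∪ σ).card ≤ r := by
      have h1 := Finset.card_union_le U σ
      omega
    have hA'sub : A' ⊆ X.induced ↑(U ∪ σ) := by
      rintro ρ ⟨hne, hsub, hcase⟩
      refine ⟨?_, hsub⟩
      rcases hcase with h0 | hmem
      · have hρσ : ρ ⊆ σ := by
          intro x hx
          by_contra hxσ
          exact absurd (Finset.mem_sdiff.mpr ⟨hx, hxσ⟩) (by simp [h0])
        exact X.down_closed hσ hρσ hne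
      · have hρσ : ρ \ σ ∪ σ ∈ X.faces := (hA hmem).1.2.2
        refine X.down_closed hρσ ?_ hne
        rw [Finset.sdiff_union_self_eq_union]
        exact Finset.subset_union_left
    have hA'dc : DownClosed A' := by
      rintro ρ ⟨hne, hsub, hcase⟩ ρ' hρ' hne'
      refine ⟨hne', (Finset.coe_subset.mpr hρ').trans hsub, ?_⟩
      rcases eq_or_ne (ρ' \ σ) ∅ with h0 | hne0
      · exact Or.inl h0
      · rcases hcase with h0 | hmem
        · exact absurd (Finset.subset_empty.mp
            (h0 ▸ Finset.sdiff_subset_sdiff hρ' (le_refl σ))) hne0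
        · exact Or.inr (hAdc hmem (Finset.sdiff_subset_sdiff hρ' (le_refl σ))
            (Finset.nonempty_iff_ne_empty.mpr hne0))
    obtain ⟨v, hv, hvU', heq⟩ := hamp (U ∪ σ) hU'verts hU'card A' hA'sub hA'dc
    have hvσ : v ∉ σ := fun h => hvU' (Finset.mem_union_right _ h)
    have hvU : v ∉ U := fun h => hvU' (Finset.mem_union_left _ h)
    -- σ itself belongs to A', hence insert v σ is a face of X
    have hσA' : σ ∈ A' :=
      ⟨X.nonempty_of_mem hσ, by rw [Finset.coe_union]; exact Set.subset_union_right,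
        Or.inl (Finset.sdiff_self σ)⟩
    have hσlink : σ ∈ X.link v ∩ X.induced ↑(U ∪ σ) := by rw [heq]; exact hσA'
    have hvins : insert v σ ∈ X.faces := hσlink.1.2.2
    have hvL : v ∈ L.verts := by
      refine ⟨hv, ?_, ?_⟩
      · simp [Finset.disjoint_singleton_left, hvσ]
      · rwa [Finset.insert_eq] at hvins
    refine ⟨v, hvL, hvU, ?_⟩
    ext τ
    constructor
    · rintro ⟨⟨hτL, hvτ, hinsL⟩, _, hτU⟩
      obtain ⟨hτX, hτdisj, hτuσ⟩ := hτL
      obtain ⟨_, _, hinsuσ⟩ := hinsL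
      have hne : τ.Nonempty := X.nonempty_of_mem hτX
      have hmem : τ ∪ σ ∈ X.link v ∩ X.induced ↑(U ∪ σ) := by
        refine ⟨⟨hτuσ, ?_, ?_⟩, hτuσ, ?_⟩
        · simp only [Finset.mem_union, not_or]
          exact ⟨hvτ, hvσ⟩
        · rw [← Finset.insert_union]; exact hinsuσ
        · rw [Finset.coe_union, Finset.coe_union]
          exact Set.union_subset (hτU.trans Set.subset_union_left) Set.subset_union_right
      have hA'mem : τ ∪ σ ∈ A' := by rw [← heq]; exact hmem
      have hsd : (τ ∪ σ) \ σ = τ := by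
        rw [Finset.union_sdiff_right, Finset.sdiff_eq_self_of_disjoint hτdisj]
      rcases hA'mem.2.2 with h0 | hmem'
      · rw [hsd] at h0; exact absurd h0 (Finset.nonempty_iff_ne_empty.mp hne)
      · rwa [hsd] at hmem'
    · intro hτA
      obtain ⟨⟨hτX, hτdisj, hτuσ⟩, hτU⟩ := hA hτA
      have hne : τ.Nonempty := X.nonempty_of_mem hτX
      have hsd : (τ ∪ σ) \ σ = τ := by
        rw [Finset.union_sdiff_right, Finset.sdiff_eq_self_of_disjoint hτdisj]
      have hA'mem : τ ∪ σ ∈ A' := by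
        refine ⟨hne.mono Finset.subset_union_left, ?_, Or.inr (by rw [hsd]; exact hτA)⟩
        rw [Finset.coe_union, Finset.coe_union]
        exact Set.union_subset (hτU.trans Set.subset_union_left) Set.subset_union_right
      have hmem : τ ∪ σ ∈ X.link v ∩ X.induced ↑(U ∪ σ) := by rw [heq]; exact hA'mem
      have hinsuσ : insert v (τ ∪ σ) ∈ X.faces := hmem.1.2.2
      have hvτ : v ∉ τ := fun h => hvU (hτU h)
      refine ⟨⟨⟨hτX, hτdisj, hτuσ⟩, hvτ, ?_, ?_, ?_⟩, ⟨hτX, hτdisj, hτuσ⟩, hτU⟩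
      · exact X.down_closed hinsuσ
          (Finset.insert_subset_insert v Finset.subset_union_left)
          ⟨v, Finset.mem_insert_self _ _⟩
      · rw [Finset.disjoint_insert_left]
        exact ⟨hvσ, hτdisj⟩
      · rw [Finset.insert_union]; exact hinsuσ
end

section
/- Every r-ample simplicial complex has at least M'(r) + r vertexes, where M'(r) denotes the number of simplicial complexes (including the empty complex) whose vertex set is contained in {1, 2, …, r}. In particular, an r-ample complex has at least 2^(binom(r, ⌊r/2⌋)) + r vertexes. -/
open SComplex in
private lemma aux_downclosed_induced {V : Type*} (X : SComplex V) (U : Set V) :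
    SComplex.DownClosed (X.induced U) := fun _ hσ τ hτ hne =>
  ⟨X.down_closed hσ.1 hτ hne, (Finset.coe_subset.mpr hτ).trans hσ.2⟩

open SComplex in
private lemma aux_exists_full_simplex {V : Type*} [DecidableEq V] (X : SComplex V) {r : ℕ}
    (hX : X.Ample r) : ∀ n, n ≤ r → ∃ U : Finset V, U.card = n ∧ (U : Set V) ⊆ X.verts ∧
      ∀ τ ⊆ U, τ.Nonempty → τ ∈ X.faces := by
  intro n
  induction n with
  | zero =>
    refine fun _ => ⟨∅, rfl, by simp, fun τ hτ hne => ?_⟩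
    rw [Finset.subset_empty.mp hτ] at hne
    exact absurd rfl hne.ne_empty
  | succ n ih =>
    intro hn
    obtain ⟨U, hcard, hsub, hfull⟩ := ih (by omega)
    obtain ⟨v, hv, hvU, hlink⟩ := hX.2 U hsub (by omega) (X.induced (U : Set V))
      (le_refl _) (aux_downclosed_induced X _)
    have hlink' : X.induced (U : Set V) ⊆ X.link v := Set.inter_eq_right.mp hlink
    refine ⟨insert v U, by rw [Finset.card_insert_of_notMem hvU, hcard], ?_, ?_⟩
    · rw [Finset.coe_insert]; exact Set.insert_subset hv hsub
    · intro τ hτ hne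
      by_cases hvτ : v ∈ τ
      · rcases Finset.eq_empty_or_nonempty (τ.erase v) with he | he
        · have hτv : τ = {v} := by
            apply Finset.eq_singleton_iff_unique_mem.mpr
            exact ⟨hvτ, fun x hx => by
              by_contra hxv
              exact (Finset.notMem_empty x) (he ▸ Finset.mem_erase.mpr ⟨hxv, hx⟩)⟩
          rw [hτv]; exact hv
        · have hsubU : τ.erase v ⊆ U := by
            intro x hx
            rcases Finset.mem_erase.mp hx with ⟨hxv, hxτ⟩
            exact (Finset.mem_insert.mp (hτ hxτ)).resolve_left hxv
          have h1 : τ.erase v ∈ X.induced (U : Set V) :=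
            ⟨hfull _ hsubU he, Finset.coe_subset.mpr hsubU⟩
          have h2 := (hlink' h1).2.2
          rwa [Finset.insert_erase hvτ] at h2
      · exact hfull τ (fun x hx =>
          (Finset.mem_insert.mp (hτ hx)).resolve_left (by rintro rfl; exact hvτ hx)) hne

open SComplex in
private lemma aux_pow_le_Mprime {r : ℕ} (hr : 1 ≤ r) :
    2 ^ r.choose (r / 2) ≤ Mprime r := by
  set k := r - r / 2 with hkdef
  have hk1 : 1 ≤ k := by
    have := Nat.div_lt_self (by omega : 0 < r) (by norm_num : 1 < 2)
    omega
  have hch : r.choose k = r.choose (r / 2) := Nat.choose_symm (Nat.div_le_self r 2)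
  let g : Finset {σ : Finset (Fin r) // σ.card = k} →
      {A : Set (Finset (Fin r)) // (∀ σ ∈ A, σ.Nonempty) ∧ DownClosed A} :=
    fun T => ⟨{τ | τ.Nonempty ∧ ∃ σ ∈ T, τ ⊆ σ.val},
      fun σ hσ => hσ.1,
      fun σ hσ τ hτ hne => ⟨hne, hσ.2.imp fun ρ hρ => ⟨hρ.1, hτ.trans hρ.2⟩⟩⟩
  have key : ∀ T₁ T₂ : Finset {σ : Finset (Fin r) // σ.card = k}, g T₁ = g T₂ → T₁ ⊆ T₂ := by
    intro T₁ T₂ h σ hσ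
    have h1 : σ.val ∈ (g T₁).val :=
      ⟨Finset.card_pos.mp (by rw [σ.2]; omega), σ, hσ, Finset.Subset.refl _⟩
    rw [h] at h1
    obtain ⟨hne, σ', hσ', hsub⟩ := h1
    have : σ.val = σ'.val := Finset.eq_of_subset_of_card_le hsub (by rw [σ.2, σ'.2])
    rwa [Subtype.ext this]
  have hg : Function.Injective g := fun T₁ T₂ h =>
    le_antisymm (key _ _ h) (key _ _ h.symm)
  calc 2 ^ r.choose (r / 2)
      = Nat.card (Finset {σ : Finset (Fin r) // σ.card = k}) := by
        rw [Nat.card_eq_fintype_card, Fintype.card_finset, Fintype.card_finset_len,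
          Fintype.card_fin, hch]
    _ ≤ Mprime r := Nat.card_le_card_of_injective g hg

open SComplex in
/-- an `r`-ample complex has at least `M'(r) + r` vertexes, and in
particular at least `2 ^ (binom r ⌊r/2⌋) + r` vertexes. -/
theorem stmt2 {V : Type*} [DecidableEq V] (X : SComplex V) (r : ℕ) (hr : 1 ≤ r)
    (hX : X.Ample r) :
    ∃ S : Finset V, (S : Set V) ⊆ X.verts ∧ Mprime r + r ≤ S.card ∧
      2 ^ r.choose (r / 2) + r ≤ S.card := by
  classical
  obtain ⟨U, hUcard, hUsub, hUfull⟩ := aux_exists_full_simplex X hX r le_rfl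
  let E : Fin r ≃ U := (finCongr hUcard.symm).trans U.equivFin.symm
  let emb : Fin r → V := fun i => (E i : V)
  have hembinj : Function.Injective emb := fun a b h =>
    E.injective (Subtype.ext h)
  have hembU : ∀ i, emb i ∈ U := fun i => (E i).2
  -- image of a complex on `Fin r`
  have hA'sub : ∀ A : Set (Finset (Fin r)), (∀ σ ∈ A, σ.Nonempty) →
      (Finset.image emb) '' A ⊆ X.induced (U : Set V) := by
    rintro A hA σ' ⟨σ, hσ, rfl⟩
    have hsubU : σ.image emb ⊆ U := by
      intro x hx
      obtain ⟨i, _, rfl⟩ := Finset.mem_image.mp hx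
      exact hembU i
    exact ⟨hUfull _ hsubU ((hA σ hσ).image emb), Finset.coe_subset.mpr hsubU⟩
  have hA'dc : ∀ A : Set (Finset (Fin r)), DownClosed A →
      DownClosed ((Finset.image emb) '' A) := by
    rintro A hA σ' ⟨σ, hσ, rfl⟩ τ hτ hne
    refine ⟨σ.filter (fun i => emb i ∈ τ), hA hσ (Finset.filter_subset _ _) ?_, ?_⟩
    · obtain ⟨x, hx⟩ := hne
      obtain ⟨i, hi, rfl⟩ := Finset.mem_image.mp (hτ hx)
      exact ⟨i, Finset.mem_filter.mpr ⟨hi, hx⟩⟩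
    · apply Finset.Subset.antisymm
      · intro x hx
        obtain ⟨i, hi, rfl⟩ := Finset.mem_image.mp hx
        exact (Finset.mem_filter.mp hi).2
      · intro x hx
        obtain ⟨i, hi, rfl⟩ := Finset.mem_image.mp (hτ hx)
        exact Finset.mem_image.mpr ⟨i, Finset.mem_filter.mpr ⟨hi, hx⟩, rfl⟩
  have hex : ∀ A : {A : Set (Finset (Fin r)) // (∀ σ ∈ A, σ.Nonempty) ∧ DownClosed A},
      ∃ v, v ∈ X.verts ∧ v ∉ U ∧
        X.link v ∩ X.induced (U : Set V) = (Finset.image emb) '' A.val := by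
    intro A
    obtain ⟨v, hv, h1, h2⟩ := hX.2 U hUsub (by rw [hUcard]) _
      (hA'sub A.val A.2.1) (hA'dc A.val A.2.2)
    exact ⟨v, hv, h1, h2⟩
  choose f hf1 hf2 hf3 using hex
  have hfinj : Function.Injective f := by
    intro A₁ A₂ h
    apply Subtype.ext
    apply Set.image_injective.mpr (Finset.image_injective hembinj)
    rw [← hf3 A₁, ← hf3 A₂, h]
  have hfin : (Set.range f).Finite := Set.finite_range f
  have hdisj : Disjoint U hfin.toFinset := by
    rw [Finset.disjoint_right]
    intro x hx
    obtain ⟨A, rfl⟩ := hfin.mem_toFinset.mp hx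
    exact hf2 A
  have hcardT : hfin.toFinset.card = Mprime r := by
    rw [← Set.ncard_eq_toFinset_card _ hfin, ← Nat.card_coe_set_eq, Nat.card_range_of_injective hfinj]
    rfl
  have hScard : (U ∪ hfin.toFinset).card = Mprime r + r := by
    rw [Finset.card_union_of_disjoint hdisj, hUcard, hcardT]
    omega
  refine ⟨U ∪ hfin.toFinset, ?_, ?_, ?_⟩
  · rw [Finset.coe_union]
    apply Set.union_subset hUsub
    intro x hx
    obtain ⟨A, rfl⟩ := hfin.mem_toFinset.mp (by exact_mod_cast hx)
    exact hf1 A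
  · omega
  · have := aux_pow_le_Mprime hr
    omega
end

section
/- For every integer r ≥ 5 and for every integer n ≥ r·2^r·2^(2^r), there exists an r-ample simplicial complex having exactly n vertexes. -/
lemma cube_le_two_pow : ∀ s : ℕ, 10 ≤ s → s^3 ≤ 2^s := by
  intro s hs
  induction s, hs using Nat.le_induction with
  | base => norm_num
  | succ m hm ih =>
    have h2 : (m+1)^3 ≤ 2 * m^3 := by
      have e1 : m*m^2 = m^3 := by ring
      have e2 : 10*m^2 ≤ m*m^2 := Nat.mul_le_mul_right _ hm
      nlinarith [e1, e2, hm]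
    calc (m+1)^3 ≤ 2 * m^3 := h2
      _ ≤ 2 * 2^m := by omega
      _ = 2^(m+1) := by ring

lemma pow_succ_aux (x : ℕ) : ∀ n : ℕ, x^(n+1) + (n+1) * x^n ≤ (x+1)^(n+1) := by
  intro n
  induction n with
  | zero => simp
  | succ k ih =>
    show x^(k+2) + (k+2) * x^(k+1) ≤ (x+1)^(k+2)
    have h1 : (x+1)^(k+2) = (x+1)^(k+1) * (x+1) := by ring
    have h2 : (x^(k+1) + (k+1) * x^k) * (x+1) ≤ (x+1)^(k+1) * (x+1) :=
      Nat.mul_le_mul_right _ ih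
    have e1 : (x^(k+1) + (k+1) * x^k) * (x+1)
        = x^(k+2) + (k+2)*x^(k+1) + (k+1)*x^k := by ring
    have h3 : x^(k+2) + (k+2) * x^(k+1) ≤ (x^(k+1) + (k+1) * x^k) * (x+1) := by
      rw [e1]; exact Nat.le_add_right _ _
    linarith

lemma two_mul_pred_pow (a : ℕ) (ha : 1 ≤ a) : 2 * (a-1)^a ≤ a^a := by
  obtain ⟨x, rfl⟩ : ∃ x, a = x + 1 := ⟨a - 1, by omega⟩
  simp only [Nat.add_sub_cancel]
  have key := pow_succ_aux x x
  have hx : x * x^x = x^(x+1) := by ring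
  have h5 : x^(x+1) ≤ (x+1) * x^x := by
    rw [← hx]; exact Nat.mul_le_mul_right _ (by omega)
  linarith

lemma decay (a k : ℕ) (ha : 1 ≤ a) : (a-1)^k * 2^(k/a) ≤ a^k := by
  obtain ⟨q, s, hs, hk⟩ : ∃ q s, s < a ∧ k = a * q + s :=
    ⟨k / a, k % a, Nat.mod_lt _ ha, (Nat.div_add_mod k a).symm⟩
  have hdiv : k / a = q := by
    subst hk; rw [Nat.mul_add_div (by omega), Nat.div_eq_of_lt hs]; omega
  subst hk
  rw [hdiv]
  have h1 : (a-1)^(a*q+s) = ((a-1)^a)^q * (a-1)^s := by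
    rw [pow_add, pow_mul]
  rw [h1]
  have h2 : ((a-1)^a)^q * (a-1)^s * 2^q = ((a-1)^a * 2)^q * (a-1)^s := by
    rw [mul_pow]; ring
  rw [h2]
  have h3 : ((a-1)^a * 2)^q ≤ (a^a)^q :=
    Nat.pow_le_pow_left (by have := two_mul_pred_pow a ha; omega) q
  calc ((a-1)^a * 2)^q * (a-1)^s ≤ (a^a)^q * a^s :=
        Nat.mul_le_mul h3 (Nat.pow_le_pow_left (by omega) s)
    _ = a^(a*q+s) := by rw [← pow_mul, ← pow_add]

lemma arith_core (r L : ℕ) (hr : 5 ≤ r) :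
    ∀ n : ℕ, r * 2^r * 2^(2^r) ≤ n → L = Nat.log 2 n →
    2^(2^r - 1) * (r*L + 2*r + 2^r) + r ≤ n := by
  intro n hn hL
  set e := 2^(r-1) with he
  have h2r : 2^r = 2 * e := by
    rw [he, ← pow_succ']; congr 1; omega
  have hre : r ≤ e := by
    have := Nat.lt_two_pow_self (n := r-1); omega
  have he16 : 16 ≤ e := by
    calc (16:ℕ) = 2^4 := by norm_num
    _ ≤ 2^(r-1) := Nat.pow_le_pow_right (by norm_num) (by omega)
  set H := 2^(2^r - 1) with hH
  have hrH : r + 1 ≤ H := by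
    calc r + 1 ≤ 2^r := Nat.lt_two_pow_self (n := r)
    _ ≤ H := Nat.pow_le_pow_right (by norm_num) (by have := Nat.lt_two_pow_self (n := r); omega)
  have hn' : 4*r*e*H ≤ n := by
    calc 4*r*e*H = r * 2^r * 2^(2^r) := by
          have hp : (0:ℕ) < 2^r := Nat.two_pow_pos r
          have h2 : (2:ℕ)^(2^r) = 2 * H := by
            rw [hH, ← pow_succ']; congr 1; omega
          rw [h2, h2r]; ring
    _ ≤ n := hn
  rcases Nat.lt_or_ge L (3*e + 1) with hc | hc
  · -- case A : L ≤ 3e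
    have key : r*L + 2*r + 2^r + 1 ≤ 4*r*e := by
      rw [h2r]
      have h1 : r * L ≤ 3*r*e := by
        calc r * L ≤ r * (3*e) := Nat.mul_le_mul_left _ (by omega)
        _ = 3*r*e := by ring
      nlinarith [h1, hre, he16, hr]
    calc H * (r*L + 2*r + 2^r) + r ≤ H * (r*L + 2*r + 2^r) + H := by omega
      _ = H * (r*L + 2*r + 2^r + 1) := by ring
      _ ≤ H * (4*r*e) := Nat.mul_le_mul_left _ key
      _ = 4*r*e*H := by ring
      _ ≤ n := hn'
  · -- case B : L ≥ 3e + 1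
    have hn0 : n ≠ 0 := by
      intro h; subst h
      have : 0 < r * 2^r * 2^(2^r) := by positivity
      omega
    have hnL : 2^L ≤ n := hL ▸ Nat.pow_log_le_self 2 hn0
    set s := L - (2*e - 1) with hs
    have hse : e + 2 ≤ s := by omega
    have hs18 : 18 ≤ s := by omega
    have hLs : L = s + 2*e - 1 := by omega
    have hpow : 2^L = H * 2^s := by
      rw [hH, ← pow_add]; congr 1; rw [h2r]; omega
    have hcube : s^3 ≤ 2^s := cube_le_two_pow s (by omega)
    have key : r*L + 2*r + 2^r + 1 ≤ 2^s := by
      rw [h2r]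
      have hLle : L ≤ s + 2*e := by omega
      have step1 : r*L + 2*r + 2*e + 1 ≤ r*(s + 2*e) + 2*r + 2*e + 1 := by
        have := Nat.mul_le_mul_left r hLle; omega
      have step2 : r*(s + 2*e) + 2*r + 2*e + 1 ≤ s^3 := by
        have hes : e ≤ s := by omega
        have hrs : r ≤ s := by omega
        have h1 : r*(s + 2*e) ≤ s*(3*s) := Nat.mul_le_mul hrs (by omega)
        have e4 : s*(3*s) = 3*s^2 := by ring
        have e3 : s*s^2 = s^3 := by ring
        have h2 : 18*s^2 ≤ s^3 := by rw [← e3]; exact Nat.mul_le_mul_right _ hs18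
        have e5 : s*s = s^2 := by ring
        have h5 : 18*s ≤ s^2 := by rw [← e5]; exact Nat.mul_le_mul_right _ hs18
        linarith
      omega
    calc H * (r*L + 2*r + 2^r) + r ≤ H * (r*L + 2*r + 2^r) + H := by omega
      _ = H * (r*L + 2*r + 2^r + 1) := by ring
      _ ≤ H * 2^s := Nat.mul_le_mul_left _ key
      _ = 2^L := hpow.symm
      _ ≤ n := hnL

lemma arith_main (r n : ℕ) (hr : 5 ≤ r) (hn : r * 2^r * 2^(2^r) ≤ n) :
    (r+1) * n^r * 2^(2^r) < 2^((n - r)/2^(2^r - 1)) := by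
  have hcore := arith_core r (Nat.log 2 n) hr n hn rfl
  have hH : (0:ℕ) < 2^(2^r - 1) := Nat.two_pow_pos _
  set L := Nat.log 2 n with hdefL
  have hq : r*L + 2*r + 2^r ≤ (n - r)/2^(2^r - 1) := by
    rw [Nat.le_div_iff_mul_le hH]
    have e1 : (r*L + 2*r + 2^r) * 2^(2^r - 1) = 2^(2^r - 1) * (r*L + 2*r + 2^r) := by
      ring
    rw [e1]; omega
  have hn0 : 0 < n := lt_of_lt_of_le (by positivity) hn
  have h1 : n < 2^(L+1) := Nat.lt_pow_succ_log_self (by norm_num) n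
  have h2 : n^r < 2^((L+1)*r) := by
    rw [pow_mul]
    exact Nat.pow_lt_pow_left h1 (by omega)
  have h3 : r+1 ≤ 2^r := Nat.lt_two_pow_self (n := r)
  calc (r+1) * n^r * 2^(2^r) ≤ 2^r * n^r * 2^(2^r) :=
        Nat.mul_le_mul_right _ (Nat.mul_le_mul_right _ h3)
    _ < 2^r * 2^((L+1)*r) * 2^(2^r) := by
        gcongr 2^r * ?_ * 2^(2^r)
    _ = 2^(r + (L+1)*r + 2^r) := by rw [pow_add, pow_add]
    _ ≤ 2^((n-r)/2^(2^r-1)) := by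
        apply Nat.pow_le_pow_right (by norm_num)
        have e2 : r + (L+1)*r + 2^r = r*L + 2*r + 2^r := by ring
        omega


section AbstractCount

variable {α K T : Type*} [Fintype α] [DecidableEq α] [Fintype K] [Fintype T]
  [DecidableEq T]

lemma abstract_count (ι : K × T → α) (hι : Function.Injective ι) (tgt : T → Bool) :
    Nat.card {f : α → Bool // ∀ v : K, ∃ τ : T, f (ι (v, τ)) ≠ tgt τ}
      * (2 ^ Fintype.card T) ^ Fintype.card K
    ≤ (2 ^ Fintype.card T - 1) ^ Fintype.card K * Nat.card (α → Bool) := by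
  classical
  set S : Set α := Set.range ι with hS
  set e1 : K × T ≃ S := Equiv.ofInjective ι hι with he1
  set e : (α → Bool) ≃ (K → T → Bool) × (↥(Sᶜ) → Bool) :=
    ((Equiv.arrowCongr (Equiv.Set.sumCompl S).symm (Equiv.refl Bool)).trans
      (Equiv.sumArrowEquivProdArrow _ _ _)).trans
      (Equiv.prodCongr ((Equiv.arrowCongr e1 (Equiv.refl Bool)).symm.trans
        (Equiv.curry _ _ _)) (Equiv.refl _)) with he
  have hev : ∀ (f : α → Bool) (v : K) (τ : T), (e f).1 v τ = f (ι (v, τ)) := by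
    intro f v τ
    simp [he, he1, Equiv.sumArrowEquivProdArrow, Equiv.curry, Equiv.arrowCongr,
      Equiv.Set.sumCompl_apply_inl]
    rfl
  have hsub : ∀ f : α → Bool,
      (∀ v : K, ∃ τ : T, f (ι (v, τ)) ≠ tgt τ) ↔ ∀ v : K, (e f).1 v ≠ tgt := by
    intro f
    constructor
    · intro h v heq
      obtain ⟨τ, h3⟩ := h v
      apply h3
      have h4 := congrFun heq τ
      rw [hev] at h4
      exact h4
    · intro h v
      have h5 := h v
      rw [Function.ne_iff] at h5
      obtain ⟨τ, hτ⟩ := h5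
      exact ⟨τ, by rw [← hev f v τ]; exact hτ⟩
  have hcard1 : Nat.card {f : α → Bool // ∀ v : K, ∃ τ : T, f (ι (v, τ)) ≠ tgt τ}
      = (2 ^ Fintype.card T - 1) ^ Fintype.card K * Nat.card (↥(Sᶜ) → Bool) := by
    have e3 : {p : (K → T → Bool) × (↥(Sᶜ) → Bool) // ∀ v, p.1 v ≠ tgt}
        ≃ {g : K → T → Bool // ∀ v, g v ≠ tgt} × (↥(Sᶜ) → Bool) :=
      { toFun := fun p => (⟨p.1.1, p.2⟩, p.1.2)
        invFun := fun x => ⟨(x.1.1, x.2), x.1.2⟩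
        left_inv := fun p => rfl
        right_inv := fun x => rfl }
    have e2 : {f : α → Bool // ∀ v : K, ∃ τ : T, f (ι (v, τ)) ≠ tgt τ}
        ≃ {g : K → T → Bool // ∀ v, g v ≠ tgt} × (↥(Sᶜ) → Bool) :=
      (Equiv.subtypeEquiv e (fun f => hsub f)).trans e3
    rw [Nat.card_congr e2, Nat.card_prod]
    congr 1
    rw [Nat.card_congr
      (Equiv.subtypePiEquivPi (p := fun (_ : K) (h : T → Bool) => h ≠ tgt))]
    rw [Nat.card_pi]
    have hfac : ∀ v : K, Nat.card {h : T → Bool // h ≠ tgt} = 2 ^ Fintype.card T - 1 := by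
      intro v
      rw [Nat.card_eq_fintype_card, Fintype.card_subtype_compl, Fintype.card_subtype_eq,
        Fintype.card_fun, Fintype.card_bool]
    rw [Finset.prod_congr rfl (fun v _ => hfac v), Finset.prod_const,
      Finset.card_univ]
  have hcard2 : Nat.card (α → Bool)
      = (2 ^ Fintype.card T) ^ Fintype.card K * Nat.card (↥(Sᶜ) → Bool) := by
    rw [Nat.card_congr e, Nat.card_prod]
    congr 1
    rw [Nat.card_eq_fintype_card, Fintype.card_fun, Fintype.card_fun,
      Fintype.card_bool]
  rw [hcard1, hcard2]
  ring_nf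
  exact le_refl _

end AbstractCount

lemma badcard (r n : ℕ) (U : Finset (Fin n)) (hUr : U.card ≤ r)
    (B : Finset (Finset (Fin n))) :
    Nat.card {f : Finset (Fin n) → Bool // ∀ v ∉ U, ∃ τ, τ ⊆ U ∧ τ.Nonempty ∧
      f (insert v τ) ≠ decide (τ ∈ B)} * 2^((n-r)/2^(2^r-1))
      ≤ Nat.card (Finset (Fin n) → Bool) := by
  classical
  let K := {v : Fin n // v ∉ U}
  let T := {τ : Finset (Fin n) // τ ⊆ U ∧ τ.Nonempty}
  let ι : K × T → Finset (Fin n) := fun p => insert p.1.1 p.2.1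
  have hι : Function.Injective ι := by
    rintro ⟨⟨v, hv⟩, ⟨τ, hτU, hτne⟩⟩ ⟨⟨w, hw⟩, ⟨ρ, hρU, hρne⟩⟩ h
    simp only [ι] at h
    have hτρ : τ = ρ := by
      ext x; constructor
      · intro hx
        have hx2 : x ∈ insert w ρ := h ▸ (Finset.mem_insert_of_mem hx)
        rcases Finset.mem_insert.1 hx2 with h1 | h1
        · exact absurd (hτU hx) (h1 ▸ hw)
        · exact h1
      · intro hx
        have hx2 : x ∈ insert v τ := h.symm ▸ (Finset.mem_insert_of_mem hx)
        rcases Finset.mem_insert.1 hx2 with h1 | h1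
        · exact absurd (hρU hx) (h1 ▸ hv)
        · exact h1
    have hvw : v = w := by
      have hv2 : v ∈ insert w ρ := h ▸ Finset.mem_insert_self v τ
      rcases Finset.mem_insert.1 hv2 with h1 | h1
      · exact h1
      · exact absurd (hρU h1) hv
    subst hτρ; subst hvw; rfl
  let tgt : T → Bool := fun τ => decide (τ.1 ∈ B)
  have hiff : ∀ f : Finset (Fin n) → Bool,
      (∀ v ∉ U, ∃ τ, τ ⊆ U ∧ τ.Nonempty ∧ f (insert v τ) ≠ decide (τ ∈ B))
      ↔ (∀ v : K, ∃ τ : T, f (ι (v, τ)) ≠ tgt τ) := by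
    intro f
    constructor
    · rintro h ⟨v, hv⟩
      obtain ⟨τ, h1, h2, h3⟩ := h v hv
      exact ⟨⟨τ, h1, h2⟩, h3⟩
    · intro h v hv
      obtain ⟨⟨τ, h1, h2⟩, h3⟩ := h ⟨v, hv⟩
      exact ⟨τ, h1, h2, h3⟩
  rw [Nat.card_congr (Equiv.subtypeEquivRight hiff)]
  have hcT : Fintype.card T ≤ 2^r - 1 := by
    have h1 : Fintype.card T ≤ (U.powerset.erase ∅).card := by
      rw [← Fintype.card_coe (U.powerset.erase ∅)]
      apply Fintype.card_le_of_injective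
        (fun τ => (⟨τ.1, by
          simp only [Finset.mem_erase, Finset.mem_powerset]
          exact ⟨τ.2.2.ne_empty, τ.2.1⟩⟩ : ↥(U.powerset.erase ∅)))
      intro x y hxy
      simp only [Subtype.mk.injEq] at hxy
      exact Subtype.ext hxy
    have h2 : (U.powerset.erase ∅).card = 2^U.card - 1 := by
      rw [Finset.card_erase_of_mem (by simp), Finset.card_powerset]
    have h3 : 2^U.card ≤ 2^r := Nat.pow_le_pow_right (by norm_num) hUr
    omega
  have hcK : n - r ≤ Fintype.card K := by
    have h1 : Fintype.card K = n - U.card := by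
      rw [Fintype.card_subtype_compl, Fintype.card_fin, Fintype.card_coe]
    omega
  have habs := abstract_count ι hι tgt
  set cK := Fintype.card K with hcKdef
  set a := 2 ^ Fintype.card T with hadef
  have ha1 : 1 ≤ a := Nat.one_le_two_pow
  have hale : a ≤ 2^(2^r - 1) := Nat.pow_le_pow_right (by norm_num) hcT
  have hq' : (n - r)/2^(2^r-1) ≤ cK / a :=
    le_trans (Nat.div_le_div_left hale ha1) (Nat.div_le_div_right hcK)
  set N := Nat.card (Finset (Fin n) → Bool) with hN
  set X := Nat.card {f : Finset (Fin n) → Bool // ∀ v : K, ∃ τ : T,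
    f (ι (v, τ)) ≠ tgt τ} with hX
  have hpos : 0 < a ^ cK := by positivity
  apply Nat.le_of_mul_le_mul_right ?_ hpos
  calc X * 2^((n-r)/2^(2^r-1)) * a^cK = (X * a^cK) * 2^((n-r)/2^(2^r-1)) := by ring
    _ ≤ ((a-1)^cK * N) * 2^((n-r)/2^(2^r-1)) := Nat.mul_le_mul_right _ habs
    _ = ((a-1)^cK * 2^((n-r)/2^(2^r-1))) * N := by ring
    _ ≤ ((a-1)^cK * 2^(cK/a)) * N :=
        Nat.mul_le_mul_right _
          (Nat.mul_le_mul_left _ (Nat.pow_le_pow_right (by norm_num) hq'))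
    _ ≤ a^cK * N := Nat.mul_le_mul_right _ (decay a cK ha1)
    _ = N * a^cK := by ring

lemma exists_good (r n : ℕ) (hr : 5 ≤ r) (hn : r * 2^r * 2^(2^r) ≤ n) :
    ∃ f : Finset (Fin n) → Bool, ∀ U : Finset (Fin n), U.card ≤ r →
      ∀ B : Finset (Finset (Fin n)), ∃ v, v ∉ U ∧ ∀ τ, τ ⊆ U → τ.Nonempty →
        f (insert v τ) = decide (τ ∈ B) := by
  classical
  by_contra hcon
  push_neg at hcon
  set q := (n - r) / 2^(2^r - 1) with hqdef
  let Bad : Finset (Fin n) × Finset (Finset (Fin n)) → Finset (Finset (Fin n) → Bool) :=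
    fun p => Finset.univ.filter (fun f => ∀ v ∉ p.1, ∃ τ, τ ⊆ p.1 ∧ τ.Nonempty ∧
      f (insert v τ) ≠ decide (τ ∈ p.2))
  let Us : Finset (Finset (Fin n)) := Finset.univ.filter (fun U => U.card ≤ r)
  let pairs : Finset (Finset (Fin n) × Finset (Finset (Fin n))) :=
    Us.biUnion (fun U => (U.powerset.powerset).image (fun B => (U, B)))
  have hcover : (Finset.univ : Finset (Finset (Fin n) → Bool)) ⊆ pairs.biUnion Bad := by
    intro f _
    obtain ⟨U, hU, B, hB⟩ := hcon f
    rw [Finset.mem_biUnion]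
    refine ⟨(U, B ∩ U.powerset), ?_, ?_⟩
    · rw [Finset.mem_biUnion]
      refine ⟨U, by simp [Us, hU], ?_⟩
      rw [Finset.mem_image]
      exact ⟨B ∩ U.powerset, by simp [Finset.mem_powerset], rfl⟩
    · rw [Finset.mem_filter]
      refine ⟨Finset.mem_univ _, ?_⟩
      intro v hv
      obtain ⟨τ, h1, h2, h3⟩ := hB v hv
      refine ⟨τ, h1, h2, ?_⟩
      have hd : decide (τ ∈ B ∩ U.powerset) = decide (τ ∈ B) :=
        decide_eq_decide.mpr (by simp [Finset.mem_inter, Finset.mem_powerset, h1])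
      rw [hd]; exact h3
  have hbound : ∀ p ∈ pairs, (Bad p).card * 2^q ≤
      Fintype.card (Finset (Fin n) → Bool) := by
    rintro ⟨U, B⟩ hp
    have hU : U.card ≤ r := by
      simp only [pairs, Finset.mem_biUnion, Us, Finset.mem_filter, Finset.mem_univ,
        true_and, Finset.mem_image] at hp
      obtain ⟨U', hU', B', _, hEq⟩ := hp
      cases hEq
      exact hU'
    have hcard : (Bad (U, B)).card = Nat.card {f : Finset (Fin n) → Bool //
        ∀ v ∉ U, ∃ τ, τ ⊆ U ∧ τ.Nonempty ∧ f (insert v τ) ≠ decide (τ ∈ B)} := by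
      rw [Nat.card_eq_fintype_card, Fintype.card_subtype]
    rw [hcard, ← Nat.card_eq_fintype_card]
    exact badcard r n U hU B
  have hN : 0 < Fintype.card (Finset (Fin n) → Bool) := Fintype.card_pos
  have h1 : Fintype.card (Finset (Fin n) → Bool) ≤ ∑ p ∈ pairs, (Bad p).card := by
    calc Fintype.card (Finset (Fin n) → Bool)
        = (Finset.univ : Finset (Finset (Fin n) → Bool)).card := (Finset.card_univ).symm
      _ ≤ (pairs.biUnion Bad).card := Finset.card_le_card hcover
      _ ≤ ∑ p ∈ pairs, (Bad p).card := Finset.card_biUnion_le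
  have h2 : ∑ p ∈ pairs, ((Bad p).card * 2^q) ≤
      pairs.card * Fintype.card (Finset (Fin n) → Bool) := by
    calc ∑ p ∈ pairs, ((Bad p).card * 2^q)
        ≤ ∑ p ∈ pairs, Fintype.card (Finset (Fin n) → Bool) := Finset.sum_le_sum hbound
      _ = pairs.card * Fintype.card (Finset (Fin n) → Bool) := by
          rw [Finset.sum_const, smul_eq_mul]
  have hn0 : 0 < n := lt_of_lt_of_le (by positivity) hn
  have hUs : Us.card ≤ (r+1) * n^r := by
    have hsub : Us ⊆ (Finset.range (r+1)).biUnion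
        (fun i => Finset.powersetCard i Finset.univ) := by
      intro U hU
      rw [Finset.mem_biUnion]
      simp only [Us, Finset.mem_filter] at hU
      exact ⟨U.card, Finset.mem_range.mpr (by omega),
        Finset.mem_powersetCard.mpr ⟨Finset.subset_univ _, rfl⟩⟩
    calc Us.card ≤ _ := Finset.card_le_card hsub
      _ ≤ ∑ i ∈ Finset.range (r+1),
          (Finset.powersetCard i (Finset.univ : Finset (Fin n))).card :=
            Finset.card_biUnion_le
      _ ≤ ∑ i ∈ Finset.range (r+1), n^r := by
          apply Finset.sum_le_sum
          intro i hi
          rw [Finset.card_powersetCard, Finset.card_univ, Fintype.card_fin]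
          calc n.choose i ≤ n^i := Nat.choose_le_pow n i
            _ ≤ n^r := Nat.pow_le_pow_right hn0
                (by rw [Finset.mem_range] at hi; omega)
      _ = (r+1) * n^r := by rw [Finset.sum_const, Finset.card_range, smul_eq_mul]
  have hpairs : pairs.card ≤ (r+1) * n^r * 2^(2^r) := by
    calc pairs.card ≤ ∑ U ∈ Us, ((U.powerset.powerset).image (fun B => (U, B))).card :=
          Finset.card_biUnion_le
      _ ≤ ∑ U ∈ Us, 2^(2^r) := by
          apply Finset.sum_le_sum
          intro U hU
          have hU' : U.card ≤ r := by
            simp only [Us, Finset.mem_filter] at hU; exact hU.2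
          calc ((U.powerset.powerset).image (fun B => (U, B))).card
              ≤ (U.powerset.powerset).card := Finset.card_image_le
            _ = 2^(2^U.card) := by rw [Finset.card_powerset, Finset.card_powerset]
            _ ≤ 2^(2^r) := Nat.pow_le_pow_right (by norm_num)
                (Nat.pow_le_pow_right (by norm_num) hU')
      _ = Us.card * 2^(2^r) := by rw [Finset.sum_const, smul_eq_mul]
      _ ≤ (r+1) * n^r * 2^(2^r) := Nat.mul_le_mul_right _ hUs
  have harith := arith_main r n hr hn
  have hfinal : Fintype.card (Finset (Fin n) → Bool) * 2^q ≤
      pairs.card * Fintype.card (Finset (Fin n) → Bool) := by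
    calc Fintype.card (Finset (Fin n) → Bool) * 2^q
        ≤ (∑ p ∈ pairs, (Bad p).card) * 2^q := Nat.mul_le_mul_right _ h1
      _ = ∑ p ∈ pairs, ((Bad p).card * 2^q) := by rw [Finset.sum_mul]
      _ ≤ pairs.card * Fintype.card (Finset (Fin n) → Bool) := h2
  have hlt : pairs.card * Fintype.card (Finset (Fin n) → Bool) <
      2^q * Fintype.card (Finset (Fin n) → Bool) :=
    mul_lt_mul_of_pos_right (lt_of_le_of_lt hpairs harith) hN
  have hcontr : Fintype.card (Finset (Fin n) → Bool) * 2^q <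
      2^q * Fintype.card (Finset (Fin n) → Bool) := lt_of_le_of_lt hfinal hlt
  rw [mul_comm] at hcontr
  exact lt_irrefl _ hcontr


open SComplex in
/-- for every `r ≥ 5` and every `n ≥ r·2^r·2^(2^r)` there is an
`r`-ample simplicial complex with exactly `n` vertexes. -/
theorem stmt3 (r n : ℕ) (hr : 5 ≤ r) (hn : r * 2 ^ r * 2 ^ 2 ^ r ≤ n) :
    ∃ X : SComplex (Fin n), X.verts = Set.univ ∧ X.Ample r := by
  classical
  obtain ⟨f, hf⟩ := exists_good r n hr hn
  have hn0 : 0 < n := lt_of_lt_of_le (by positivity) hn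
  let X : SComplex (Fin n) :=
    { faces := {σ | σ.Nonempty ∧ ∀ τ ⊆ σ, 2 ≤ τ.card → τ.card ≤ r+1 → f τ = true}
      nonempty_of_mem := fun σ h => h.1
      down_closed := fun σ hσ τ hτ hne =>
        ⟨hne, fun ρ hρ h2 h3 => hσ.2 ρ (hρ.trans hτ) h2 h3⟩ }
  have hsingle : ∀ v : Fin n, {v} ∈ X.faces := by
    intro v
    refine ⟨Finset.singleton_nonempty v, ?_⟩
    intro τ hτ h2 h3
    exfalso
    have hc := Finset.card_le_card hτ
    rw [Finset.card_singleton] at hc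
    omega
  have hverts : X.verts = Set.univ := by
    ext v
    simp only [SComplex.verts, Set.mem_setOf_eq, Set.mem_univ, iff_true]
    exact hsingle v
  refine ⟨X, hverts, ⟨⟨{⟨0, hn0⟩}, hsingle _⟩, ?_⟩⟩
  intro U hUsub hUcard A hA hdc
  set B := U.powerset.filter (fun τ => τ ∈ A) with hBdef
  obtain ⟨v, hvU, hfv⟩ := hf U hUcard B
  have hmemB : ∀ τ, τ ⊆ U → (τ ∈ B ↔ τ ∈ A) := by
    intro τ hτ
    simp [hBdef, Finset.mem_filter, Finset.mem_powerset, hτ]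
  refine ⟨v, by rw [hverts]; trivial, hvU, ?_⟩
  ext σ
  simp only [Set.mem_inter_iff]
  constructor
  · rintro ⟨⟨hσfaces, hvσ, hins⟩, hσind⟩
    have hσU : σ ⊆ U := Finset.coe_subset.1 hσind.2
    have hσne : σ.Nonempty := hσfaces.1
    have hcard : σ.card ≤ r := le_trans (Finset.card_le_card hσU) hUcard
    have hf1 : f (insert v σ) = true := by
      have h2 : 2 ≤ (insert v σ).card := by
        rw [Finset.card_insert_of_notMem hvσ]
        have := hσne.card_pos
        omega
      have h3 : (insert v σ).card ≤ r + 1 := by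
        rw [Finset.card_insert_of_notMem hvσ]
        omega
      exact hins.2 (insert v σ) (Finset.Subset.refl _) h2 h3
    have hd := hfv σ hσU hσne
    rw [hf1] at hd
    exact (hmemB σ hσU).1 (of_decide_eq_true hd.symm)
  · intro hσA
    have hσind : σ ∈ X.induced ↑U := hA hσA
    have hσU : σ ⊆ U := Finset.coe_subset.1 hσind.2
    have hσfaces : σ ∈ X.faces := hσind.1
    have hσne : σ.Nonempty := hσfaces.1
    have hvσ : v ∉ σ := fun h => hvU (hσU h)
    refine ⟨⟨hσfaces, hvσ, ?_⟩, hσind⟩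
    refine ⟨Finset.insert_nonempty v σ, ?_⟩
    intro τ hτ h2 h3
    by_cases hvτ : v ∈ τ
    · set τ' := τ.erase v with hτ'def
      have hτ'σ : τ' ⊆ σ := Finset.subset_insert_iff.1 hτ
      have hτ'ne : τ'.Nonempty := by
        rw [← Finset.card_pos, hτ'def, Finset.card_erase_of_mem hvτ]
        omega
      have hτ'U : τ' ⊆ U := hτ'σ.trans hσU
      have hτ'A : τ' ∈ A := hdc hσA hτ'σ hτ'ne
      have hd : f (insert v τ') = decide (τ' ∈ B) := hfv τ' hτ'U hτ'ne
      have hins : insert v τ' = τ := by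
        rw [hτ'def, Finset.insert_erase hvτ]
      rw [← hins, hd]
      exact decide_eq_true ((hmemB τ' hτ'U).2 hτ'A)
    · have hτσ : τ ⊆ σ := by
        intro x hx
        rcases Finset.mem_insert.1 (hτ hx) with h1 | h1
        · exact absurd (h1 ▸ hx) hvτ
        · exact h1
      exact hσfaces.2 τ hτσ h2 h3
end

section
/- Let r ≥ 3 and let X be an r-ample simplicial complex. Let Y be obtained from X by removing a set of a₀ vertexes and a₁ edges (i.e., removing a finite set 𝓕 of simplexes consisting of a₀ singletons and a₁ two-element simplexes, so Y = { σ ∈ X : no τ ∈ 𝓕 satisfies τ ⊆ σ }). If a₀ + 2a₁ < M'(r−2) + r − 2, then Y is 2-ample; in particular, the 1-skeleton of Y is a connected graph. -/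
section AuxStmt7
set_option linter.unusedSectionVars false

open SComplex

variable {V : Type*} [DecidableEq V]

lemma downClosed_union {A B : Set (Finset V)} (hA : DownClosed A) (hB : DownClosed B) :
    DownClosed (A ∪ B) := by
  intro σ hσ τ hτ hne
  rcases hσ with h | h
  · exact Or.inl (hA h hτ hne)
  · exact Or.inr (hB h hτ hne)

lemma sc_induced_mono (X : SComplex V) {U U' : Set V} (h : U ⊆ U') :
    X.induced U ⊆ X.induced U' := fun _ hσ => ⟨hσ.1, hσ.2.trans h⟩

lemma sc_induced_downClosed (X : SComplex V) (U : Set V) : DownClosed (X.induced U) :=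
  fun _ hσ _ hτ hne => ⟨X.down_closed hσ.1 hτ hne, (Finset.coe_subset.mpr hτ).trans hσ.2⟩

/-- `v` is a good candidate for the pair `(U, A)` in `X`. -/
def IsGood (X : SComplex V) (U : Finset V) (A : Set (Finset V)) (v : V) : Prop :=
  v ∈ X.verts ∧ v ∉ U ∧ X.link v ∩ X.induced (U : Set V) = A

lemma memG_of {X : SComplex V} {U : Finset V} {A : Set (Finset V)}
    (hAX : A ⊆ X.induced (U : Set V)) {W : Finset V} (hWU : Disjoint W U)
    {B : Set (Finset V)} (hB : ∀ τ ∈ B, τ.Nonempty ∧ τ ⊆ W)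
    {v : V} (hv : v ∈ X.verts) (hvU : v ∉ U ∪ W)
    (heq : X.link v ∩ X.induced ((U ∪ W : Finset V) : Set V) = A ∪ B) :
    IsGood X U A v := by
  refine ⟨hv, fun hvU' => hvU (Finset.mem_union_left _ hvU'), ?_⟩
  ext σ
  constructor
  · rintro ⟨h1, h2⟩
    have hmem : σ ∈ A ∪ B := by
      rw [← heq]
      refine ⟨h1, sc_induced_mono X ?_ h2⟩
      rw [Finset.coe_union]; exact Set.subset_union_left
    rcases hmem with h | h
    · exact h
    · exfalso
      obtain ⟨hne, hsub⟩ := hB σ h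
      obtain ⟨x, hx⟩ := hne
      exact Finset.disjoint_left.mp hWU (hsub hx) (Finset.mem_coe.mp (h2.2 hx))
  · intro hσ
    have hmem : σ ∈ X.link v ∩ X.induced ((U ∪ W : Finset V) : Set V) := by
      rw [heq]; exact Or.inl hσ
    exact ⟨hmem.1, hAX hσ⟩

lemma ampleExt {X : SComplex V} {U : Finset V} {A : Set (Finset V)} {r : ℕ}
    (hr : 3 ≤ r) (hX : X.Ample r) (hUv : (U : Set V) ⊆ X.verts) (hU2 : U.card ≤ 2)
    (hAX : A ⊆ X.induced (U : Set V)) (hAd : DownClosed A)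
    {W : Finset V} (hWv : (W : Set V) ⊆ X.verts) (hWcard : W.card ≤ r - 2)
    (hWf : W.Nonempty → W ∈ X.faces)
    {B : Set (Finset V)} (hB : ∀ τ ∈ B, τ.Nonempty ∧ τ ⊆ W) (hBd : DownClosed B) :
    ∃ v, v ∈ X.verts ∧ v ∉ U ∪ W ∧
      X.link v ∩ X.induced ((U ∪ W : Finset V) : Set V) = A ∪ B := by
  have hsub : ((U ∪ W : Finset V) : Set V) ⊆ X.verts := by
    rw [Finset.coe_union]; exact Set.union_subset hUv hWv
  have hcard : (U ∪ W).card ≤ r := by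
    have := Finset.card_union_le U W; omega
  have hABsub : A ∪ B ⊆ X.induced ((U ∪ W : Finset V) : Set V) := by
    rintro σ (h | h)
    · refine sc_induced_mono X ?_ (hAX h)
      rw [Finset.coe_union]; exact Set.subset_union_left
    · obtain ⟨hne, hsubW⟩ := hB σ h
      have hWne : W.Nonempty := hne.mono hsubW
      refine ⟨X.down_closed (hWf hWne) hsubW hne, ?_⟩
      rw [Finset.coe_union]
      exact (Finset.coe_subset.mpr hsubW).trans Set.subset_union_right
  obtain ⟨v, hv1, hv2, hv3⟩ :=
    hX.2 (U ∪ W) hsub hcard (A ∪ B) hABsub (downClosed_union hAd hBd)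
  exact ⟨v, hv1, hv2, hv3⟩

lemma chainLemma {X : SComplex V} {U : Finset V} {A : Set (Finset V)} {r : ℕ}
    (hr : 3 ≤ r) (hX : X.Ample r) (hUv : (U : Set V) ⊆ X.verts) (hU2 : U.card ≤ 2)
    (hAX : A ⊆ X.induced (U : Set V)) (hAd : DownClosed A) :
    ∀ k, k ≤ r - 2 → ∃ W : Finset V, W.card = k ∧ (W : Set V) ⊆ X.verts ∧ Disjoint W U ∧
      (W.Nonempty → W ∈ X.faces) ∧ ∀ w ∈ W, IsGood X U A w := by
  intro k
  induction k with
  | zero =>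
    intro _
    refine ⟨∅, by simp, by simp, by simp, ?_, by simp⟩
    intro h; exact absurd h (by simp)
  | succ k ih =>
    intro hk
    obtain ⟨W, hWc, hWv, hWU, hWf, hWg⟩ := ih (by omega)
    have hB : ∀ τ ∈ {σ : Finset V | σ.Nonempty ∧ σ ⊆ W}, τ.Nonempty ∧ τ ⊆ W := fun _ h => h
    have hBd : DownClosed {σ : Finset V | σ.Nonempty ∧ σ ⊆ W} :=
      fun σ hσ τ hτ hne => ⟨hne, hτ.trans hσ.2⟩
    obtain ⟨v, hv1, hv2, hv3⟩ :=
      ampleExt hr hX hUv hU2 hAX hAd hWv (by omega) hWf hB hBd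
    have hvW : v ∉ W := fun h => hv2 (Finset.mem_union_right _ h)
    have hvU : v ∉ U := fun h => hv2 (Finset.mem_union_left _ h)
    refine ⟨insert v W, by rw [Finset.card_insert_of_notMem hvW, hWc], ?_, ?_, ?_, ?_⟩
    · rw [Finset.coe_insert]
      exact Set.insert_subset hv1 hWv
    · exact Finset.disjoint_insert_left.mpr ⟨hvU, hWU⟩
    · intro _
      rcases W.eq_empty_or_nonempty with h | h
      · subst h
        have : ({v} : Finset V) ∈ X.faces := hv1
        simpa using this
      · have hmem : W ∈ X.link v ∩ X.induced ((U ∪ W : Finset V) : Set V) := by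
          rw [hv3]; exact Or.inr ⟨h, Finset.Subset.refl W⟩
        exact hmem.1.2.2
    · intro w hw
      rcases Finset.mem_insert.mp hw with rfl | hw
      · exact memG_of hAX hWU hB hv1 hv2 hv3
      · exact hWg w hw

lemma manyGood {X : SComplex V} {U : Finset V} {A : Set (Finset V)} {r : ℕ}
    (hr : 3 ≤ r) (hX : X.Ample r) (hUv : (U : Set V) ⊆ X.verts) (hU2 : U.card ≤ 2)
    (hAX : A ⊆ X.induced (U : Set V)) (hAd : DownClosed A) :
    ∃ C : Finset V, (∀ v ∈ C, IsGood X U A v) ∧ Mprime (r - 2) + (r - 2) ≤ C.card := by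
  obtain ⟨W, hWc, hWv, hWU, hWf, hWg⟩ := chainLemma hr hX hUv hU2 hAX hAd (r - 2) le_rfl
  -- an enumeration of `W` by `Fin (r - 2)`
  let eqv : W ≃ Fin (r - 2) := Finset.equivFinOfCardEq hWc
  let e : Fin (r - 2) → V := fun i => ((eqv.symm i : W) : V)
  have he_inj : Function.Injective e := fun i j h =>
    eqv.symm.injective (Subtype.ext h)
  have he_mem : ∀ i, e i ∈ W := fun i => (eqv.symm i).2
  -- the family of complexes on `W` indexed by complexes on `Fin (r - 2)`
  let Mt := {B : Set (Finset (Fin (r - 2))) // (∀ σ ∈ B, σ.Nonempty) ∧ DownClosed B}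
  let Bfam : Mt → Set (Finset V) := fun B => (fun σ => σ.image e) '' B.1
  have hBprop : ∀ B : Mt, ∀ τ ∈ Bfam B, τ.Nonempty ∧ τ ⊆ W := by
    rintro B τ ⟨σ, hσ, rfl⟩
    exact ⟨(B.2.1 σ hσ).image e, Finset.image_subset_iff.mpr fun i _ => he_mem i⟩
  have hBdown : ∀ B : Mt, DownClosed (Bfam B) := by
    rintro B τ' ⟨σ, hσ, rfl⟩ τ hτ hne
    refine ⟨σ.filter (fun i => e i ∈ τ), B.2.2 hσ (Finset.filter_subset _ _) ?_, ?_⟩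
    · obtain ⟨x, hx⟩ := hne
      obtain ⟨i, hi, rfl⟩ := Finset.mem_image.mp (hτ hx)
      exact ⟨i, Finset.mem_filter.mpr ⟨hi, hx⟩⟩
    · ext x
      simp only [Finset.mem_image, Finset.mem_filter]
      constructor
      · rintro ⟨i, ⟨_, hit⟩, rfl⟩; exact hit
      · intro hx
        obtain ⟨i, hi, rfl⟩ := Finset.mem_image.mp (hτ hx)
        exact ⟨i, ⟨hi, hx⟩, rfl⟩
  have hBfam_inj : Function.Injective Bfam := by
    intro B₀ B₁ h
    apply Subtype.ext
    ext σ
    constructor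
    · intro hσ
      have : σ.image e ∈ Bfam B₁ := h ▸ Set.mem_image_of_mem _ hσ
      obtain ⟨σ', hσ', heq⟩ := this
      rwa [Finset.image_injective he_inj heq] at hσ'
    · intro hσ
      have : σ.image e ∈ Bfam B₀ := h.symm ▸ Set.mem_image_of_mem _ hσ
      obtain ⟨σ', hσ', heq⟩ := this
      rwa [Finset.image_injective he_inj heq] at hσ'
  have hnotA : ∀ B : Mt, ∀ τ ∈ Bfam B, τ ∉ A := by
    intro B τ hτ hA'
    obtain ⟨hne, hsub⟩ := hBprop B τ hτ
    obtain ⟨x, hx⟩ := hne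
    exact Finset.disjoint_left.mp hWU (hsub hx) (Finset.mem_coe.mp ((hAX hA').2 hx))
  have hspec : ∀ B : Mt, ∃ v, v ∈ X.verts ∧ v ∉ U ∪ W ∧
      X.link v ∩ X.induced ((U ∪ W : Finset V) : Set V) = A ∪ Bfam B :=
    fun B => ampleExt hr hX hUv hU2 hAX hAd hWv hWc.le hWf (hBprop B) (hBdown B)
  choose c hc1 hc2 hc3 using hspec
  have hcinj : Function.Injective c := by
    intro B₀ B₁ h
    apply hBfam_inj
    have h0 := hc3 B₀
    rw [h] at h0
    have hBeq : A ∪ Bfam B₀ = A ∪ Bfam B₁ := by rw [← h0, hc3 B₁]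
    ext τ
    constructor
    · intro hτ
      have : τ ∈ A ∪ Bfam B₁ := hBeq ▸ Or.inr hτ
      exact this.resolve_left (fun hA' => hnotA B₀ τ hτ hA')
    · intro hτ
      have : τ ∈ A ∪ Bfam B₀ := hBeq ▸ Or.inr hτ
      exact this.resolve_left (fun hA' => hnotA B₁ τ hτ hA')
  have hMtfin : Finite Mt := by
    have : Finite (Set (Finset (Fin (r - 2)))) := inferInstance
    exact Subtype.finite
  have hfinrange : (Set.range c).Finite := Set.finite_range c
  refine ⟨W ∪ hfinrange.toFinset, ?_, ?_⟩
  · intro v hv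
    rcases Finset.mem_union.mp hv with h | h
    · exact hWg v h
    · rw [Set.Finite.mem_toFinset] at h
      obtain ⟨B, rfl⟩ := h
      exact memG_of hAX hWU (hBprop B) (hc1 B) (hc2 B) (hc3 B)
  · have hdisj : Disjoint W hfinrange.toFinset := by
      rw [Finset.disjoint_right]
      intro a ha
      rw [Set.Finite.mem_toFinset] at ha
      obtain ⟨B, rfl⟩ := ha
      exact fun h => (hc2 B) (Finset.mem_union_right _ h)
    rw [Finset.card_union_of_disjoint hdisj, hWc]
    have hcard2 : hfinrange.toFinset.card = Mprime (r - 2) := by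
      rw [← Set.ncard_eq_toFinset_card _ hfinrange, ← Nat.card_coe_set_eq,
        Nat.card_range_of_injective hcinj]
      rfl
    omega

lemma badBound {𝓕 : Set (Finset V)} (hfin : 𝓕.Finite)
    (hcards : ∀ σ ∈ 𝓕, σ.card = 1 ∨ σ.card = 2) {a₀ a₁ : ℕ}
    (ha₀ : a₀ = {σ ∈ 𝓕 | σ.card = 1}.ncard)
    (ha₁ : a₁ = {σ ∈ 𝓕 | σ.card = 2}.ncard) (U : Finset V) :
    {v : V | ({v} : Finset V) ∈ 𝓕 ∨ ∃ u ∈ U, ({v, u} : Finset V) ∈ 𝓕}.Finite ∧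
    {v : V | ({v} : Finset V) ∈ 𝓕 ∨ ∃ u ∈ U, ({v, u} : Finset V) ∈ 𝓕}.ncard ≤ a₀ + 2 * a₁ := by
  set F : Finset (Finset V) := hfin.toFinset with hF
  have hsub : {v : V | ({v} : Finset V) ∈ 𝓕 ∨ ∃ u ∈ U, ({v, u} : Finset V) ∈ 𝓕} ⊆
      ((F.biUnion id : Finset V) : Set V) := by
    rintro v (h | ⟨u, _, h⟩)
    · refine Finset.mem_coe.mpr (Finset.mem_biUnion.mpr ⟨{v}, hfin.mem_toFinset.mpr h, ?_⟩)
      simp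
    · refine Finset.mem_coe.mpr (Finset.mem_biUnion.mpr ⟨{v, u}, hfin.mem_toFinset.mpr h, ?_⟩)
      simp
  have hfinBd := Set.Finite.subset (F.biUnion id).finite_toSet hsub
  refine ⟨hfinBd, ?_⟩
  have h1 : {v : V | ({v} : Finset V) ∈ 𝓕 ∨ ∃ u ∈ U, ({v, u} : Finset V) ∈ 𝓕}.ncard ≤
      (F.biUnion id).card := by
    rw [← Set.ncard_coe_finset]
    exact Set.ncard_le_ncard hsub (F.biUnion id).finite_toSet
  have h2 : (F.biUnion id).card ≤ ∑ τ ∈ F, τ.card := Finset.card_biUnion_le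
  have hsplit : ∑ τ ∈ F, τ.card =
      ∑ τ ∈ F.filter (fun τ => τ.card = 1), τ.card +
      ∑ τ ∈ F.filter (fun τ => ¬ τ.card = 1), τ.card :=
    (Finset.sum_filter_add_sum_filter_not F _ _).symm
  have hs1 : ∑ τ ∈ F.filter (fun τ => τ.card = 1), τ.card =
      (F.filter (fun τ => τ.card = 1)).card * 1 := by
    rw [Finset.sum_congr rfl (fun τ hτ => (Finset.mem_filter.mp hτ).2), Finset.sum_const,
      Nat.smul_one_eq_cast]
    simp
  have hs2 : ∑ τ ∈ F.filter (fun τ => ¬ τ.card = 1), τ.card =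
      (F.filter (fun τ => ¬ τ.card = 1)).card * 2 := by
    rw [Finset.sum_congr rfl (fun τ hτ => ?_), Finset.sum_const, smul_eq_mul, Nat.mul_comm]
    have hm := Finset.mem_filter.mp hτ
    exact (hcards τ (hfin.mem_toFinset.mp hm.1)).resolve_left hm.2
  have hc1 : (F.filter (fun τ => τ.card = 1)).card = a₀ := by
    rw [ha₀]
    have : {σ ∈ 𝓕 | σ.card = 1} = ((F.filter (fun τ => τ.card = 1) : Finset (Finset V)) :
        Set (Finset V)) := by
      ext σ; simp [hF, hfin.mem_toFinset]
    rw [this, Set.ncard_coe_finset]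
  have hc2 : (F.filter (fun τ => ¬ τ.card = 1)).card = a₁ := by
    rw [ha₁]
    have : {σ ∈ 𝓕 | σ.card = 2} = ((F.filter (fun τ => ¬ τ.card = 1) : Finset (Finset V)) :
        Set (Finset V)) := by
      ext σ
      simp only [Set.mem_setOf_eq, Finset.coe_filter, hfin.mem_toFinset]
      constructor
      · rintro ⟨h1, h2⟩; exact ⟨hfin.mem_toFinset.mpr h1, by omega⟩
      · rintro ⟨h1, h2⟩; exact ⟨hfin.mem_toFinset.mp h1, (hcards σ (hfin.mem_toFinset.mp h1)).resolve_left h2⟩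
    rw [this, Set.ncard_coe_finset]
  omega

lemma keyLemma {X : SComplex V} {r : ℕ} (hr : 3 ≤ r) (hX : X.Ample r)
    {𝓕 : Set (Finset V)} (h𝓕 : 𝓕 ⊆ X.faces) (hfin : 𝓕.Finite)
    (hcards : ∀ σ ∈ 𝓕, σ.card = 1 ∨ σ.card = 2) {a₀ a₁ : ℕ}
    (ha₀ : a₀ = {σ ∈ 𝓕 | σ.card = 1}.ncard)
    (ha₁ : a₁ = {σ ∈ 𝓕 | σ.card = 2}.ncard)
    (hsize : a₀ + 2 * a₁ < Mprime (r - 2) + (r - 2))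
    (U : Finset V) (hUv : (U : Set V) ⊆ (X.remove 𝓕).verts) (hU2 : U.card ≤ 2)
    (A : Set (Finset V)) (hA : A ⊆ (X.remove 𝓕).induced (U : Set V)) (hAd : DownClosed A) :
    ∃ v ∈ (X.remove 𝓕).verts, v ∉ U ∧
      (X.remove 𝓕).link v ∩ (X.remove 𝓕).induced (U : Set V) = A := by
  have hYX : (X.remove 𝓕).faces ⊆ X.faces := fun _ h => h.1
  have hUvX : (U : Set V) ⊆ X.verts := fun x hx => (hUv hx).1
  have hAX : A ⊆ X.induced (U : Set V) := fun σ h => ⟨hYX (hA h).1, (hA h).2⟩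
  obtain ⟨C, hCg, hCc⟩ := manyGood hr hX hUvX hU2 hAX hAd
  obtain ⟨hBdfin, hBdcard⟩ := badBound hfin hcards ha₀ ha₁ U
  set Bd : Set V := {v : V | ({v} : Finset V) ∈ 𝓕 ∨ ∃ u ∈ U, ({v, u} : Finset V) ∈ 𝓕}
    with hBddef
  have hex : ∃ v ∈ C, v ∉ Bd := by
    by_contra hcon
    push_neg at hcon
    have hsub : (C : Set V) ⊆ Bd := fun v hv => hcon v (Finset.mem_coe.mp hv)
    have := Set.ncard_le_ncard hsub hBdfin
    rw [Set.ncard_coe_finset] at this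
    omega
  obtain ⟨v, hvC, hvBd⟩ := hex
  obtain ⟨hv1, hv2, hv3⟩ := hCg v hvC
  have hvBd1 : ({v} : Finset V) ∉ 𝓕 := fun h => hvBd (Or.inl h)
  have hvBd2 : ∀ u ∈ U, ({v, u} : Finset V) ∉ 𝓕 := fun u hu h => hvBd (Or.inr ⟨u, hu, h⟩)
  have hvY : v ∈ (X.remove 𝓕).verts := by
    refine ⟨hv1, ?_⟩
    intro τ hτ hsubτ
    have hne := X.nonempty_of_mem (h𝓕 hτ)
    rcases Finset.subset_singleton_iff.mp hsubτ with h | h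
    · exact hne.ne_empty h
    · exact hvBd1 (h ▸ hτ)
  refine ⟨v, hvY, hv2, ?_⟩
  ext σ
  constructor
  · rintro ⟨⟨hσY, hvσ, hins⟩, hind⟩
    rw [← hv3]
    exact ⟨⟨hσY.1, hvσ, hins.1⟩, hind.1.1, hind.2⟩
  · intro hσ
    have hσY : σ ∈ (X.remove 𝓕).induced (U : Set V) := hA hσ
    have hlX : σ ∈ X.link v ∩ X.induced (U : Set V) := by rw [hv3]; exact hσ
    refine ⟨⟨hσY.1, hlX.1.2.1, hlX.1.2.2, ?_⟩, hσY⟩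
    intro τ hτ hsubτ
    by_cases hvτ : v ∈ τ
    · rcases hcards τ hτ with h1 | h2
      · obtain ⟨a, rfl⟩ := Finset.card_eq_one.mp h1
        rw [← Finset.mem_singleton.mp hvτ] at hτ
        exact hvBd1 hτ
      · obtain ⟨a, b, hab, rfl⟩ := Finset.card_eq_two.mp h2
        rcases Finset.mem_insert.mp hvτ with rfl | hb
        · have hbσ : b ∈ σ := by
            have hbm := hsubτ (Finset.mem_insert_of_mem (Finset.mem_singleton_self b))
            rcases Finset.mem_insert.mp hbm with h | h
            · exact absurd h.symm hab
            · exact h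
          exact hvBd2 b (Finset.mem_coe.mp (hσY.2 hbσ)) hτ
        · have hvb := Finset.mem_singleton.mp hb
          subst hvb
          have haσ : a ∈ σ := by
            have ham := hsubτ (Finset.mem_insert_self a {v})
            rcases Finset.mem_insert.mp ham with h | h
            · exact absurd h hab
            · exact h
          rw [Finset.pair_comm a v] at hτ
          exact hvBd2 a (Finset.mem_coe.mp (hσY.2 haσ)) hτ
    · have hτσ : τ ⊆ σ := by
        intro x hx
        rcases Finset.mem_insert.mp (hsubτ hx) with rfl | h
        · exact absurd hx hvτ
        · exact h
      exact hσY.1.2 τ hτ hτσ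

end AuxStmt7

open SComplex in
/-- removing `a₀` vertexes and `a₁` edges from an `r`-ample complex
(`r ≥ 3`) with `a₀ + 2a₁ < M'(r-2) + r - 2` yields a `2`-ample complex, whose
1-skeleton is in particular connected. -/
theorem stmt7 {V : Type*} [DecidableEq V] (X : SComplex V) (r : ℕ) (hr : 3 ≤ r)
    (hX : X.Ample r) (𝓕 : Set (Finset V)) (h𝓕 : 𝓕 ⊆ X.faces) (hfin : 𝓕.Finite)
    (hcards : ∀ σ ∈ 𝓕, σ.card = 1 ∨ σ.card = 2)
    (a₀ a₁ : ℕ)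
    (ha₀ : a₀ = {σ ∈ 𝓕 | σ.card = 1}.ncard)
    (ha₁ : a₁ = {σ ∈ 𝓕 | σ.card = 2}.ncard)
    (hsize : a₀ + 2 * a₁ < Mprime (r - 2) + (r - 2)) :
    (X.remove 𝓕).Ample 2 ∧
      (((X.remove 𝓕).skeletonGraph).induce (X.remove 𝓕).verts).Connected := by
  have hkey : ∀ U : Finset V, (U : Set V) ⊆ (X.remove 𝓕).verts → U.card ≤ 2 →
      ∀ A : Set (Finset V), A ⊆ (X.remove 𝓕).induced (U : Set V) → DownClosed A →
        ∃ v ∈ (X.remove 𝓕).verts, v ∉ U ∧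
          (X.remove 𝓕).link v ∩ (X.remove 𝓕).induced (U : Set V) = A :=
    fun U hU hc A hA hAd => keyLemma hr hX h𝓕 hfin hcards ha₀ ha₁ hsize U hU hc A hA hAd
  have hamp : (X.remove 𝓕).Ample 2 := by
    refine ⟨?_, hkey⟩
    obtain ⟨v, hv, -, -⟩ := hkey ∅ (by simp) (by simp) ∅ (Set.empty_subset _)
      (fun σ h => absurd h (Set.notMem_empty σ))
    exact ⟨{v}, hv⟩
  refine ⟨hamp, ?_⟩
  have hvne : (X.remove 𝓕).verts.Nonempty := by
    obtain ⟨σ, hσ⟩ := hamp.1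
    obtain ⟨x, hx⟩ := (X.remove 𝓕).nonempty_of_mem hσ
    exact ⟨x, (X.remove 𝓕).down_closed hσ (Finset.singleton_subset_iff.mpr hx)
      (Finset.singleton_nonempty x)⟩
  rw [SimpleGraph.connected_iff]
  refine ⟨?_, hvne.to_subtype⟩
  rintro ⟨u, hu⟩ ⟨w, hw⟩
  by_cases huw : u = w
  · subst huw
    exact SimpleGraph.Reachable.refl _
  · have hU2 : ({u, w} : Finset V).card ≤ 2 :=
      (Finset.card_insert_le _ _).trans (by simp)
    have hUsub : (({u, w} : Finset V) : Set V) ⊆ (X.remove 𝓕).verts := by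
      rw [Finset.coe_insert, Finset.coe_singleton]
      exact Set.insert_subset hu (Set.singleton_subset_iff.mpr hw)
    obtain ⟨v, hvY, hvU, heq⟩ := hkey {u, w} hUsub hU2
      ((X.remove 𝓕).induced ((({u, w} : Finset V)) : Set V))
      (subset_refl _) (sc_induced_downClosed _ _)
    have hu' : ({u} : Finset V) ∈ (X.remove 𝓕).link v := by
      have hm : ({u} : Finset V) ∈ (X.remove 𝓕).link v ∩
          (X.remove 𝓕).induced ((({u, w} : Finset V)) : Set V) := by
        rw [heq]
        exact ⟨hu, by simp⟩
      exact hm.1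
    have hw' : ({w} : Finset V) ∈ (X.remove 𝓕).link v := by
      have hm : ({w} : Finset V) ∈ (X.remove 𝓕).link v ∩
          (X.remove 𝓕).induced ((({u, w} : Finset V)) : Set V) := by
        rw [heq]
        exact ⟨hw, by simp⟩
      exact hm.1
    have hvu : v ≠ u := fun h => hvU (h ▸ Finset.mem_insert_self u {w})
    have hvw : v ≠ w := fun h =>
      hvU (by rw [h]; exact Finset.mem_insert_of_mem (Finset.mem_singleton_self w))
    have hadj1 : (X.remove 𝓕).skeletonGraph.Adj u v := by
      refine (show u ≠ v ∧ ({u, v} : Finset V) ∈ (X.remove 𝓕).faces from ⟨fun h => hvu h.symm, ?_⟩)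
      have h2 := hu'.2.2
      rw [Finset.pair_comm u v]
      exact h2
    have hadj2 : (X.remove 𝓕).skeletonGraph.Adj v w := (show v ≠ w ∧ ({v, w} : Finset V) ∈ (X.remove 𝓕).faces from ⟨hvw, hw'.2.2⟩)
    have h1 : (((X.remove 𝓕).skeletonGraph).induce (X.remove 𝓕).verts).Adj
        ⟨u, hu⟩ ⟨v, hvY⟩ := hadj1
    have h2 : (((X.remove 𝓕).skeletonGraph).induce (X.remove 𝓕).verts).Adj
        ⟨v, hvY⟩ ⟨w, hw⟩ := hadj2
    exact h1.reachable.trans h2.reachable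
end

section
/- Every r-ample simplicial complex is r-conic: if X is r-ample, then every subcomplex L of X with at most r vertexes is contained in the closed star St_X(v) of some vertex v of X. -/
open SComplex in
/-- every `r`-ample complex is `r`-conic. -/
theorem stmt8 {V : Type*} [DecidableEq V] (X : SComplex V) (r : ℕ) (hr : 1 ≤ r)
    (hX : X.Ample r) : X.Conic r := by
  refine ⟨hX.1, fun L hL hLdc hfin hcard => ?_⟩
  set U : Finset V := hfin.toFinset with hU
  have hUcoe : (U : Set V) = vertsOf L := hfin.coe_toFinset
  have hUverts : (U : Set V) ⊆ X.verts := by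
    rw [hUcoe]
    rintro v hv
    simp only [vertsOf, Set.mem_iUnion] at hv
    obtain ⟨σ, hσ, hvσ⟩ := hv
    exact hL (hLdc hσ (Finset.singleton_subset_iff.mpr hvσ) ⟨v, Finset.mem_singleton_self v⟩)
  have hUcard : U.card ≤ r := by
    rw [← Set.ncard_coe_finset, hUcoe]; exact hcard
  have hLind : L ⊆ X.induced (U : Set V) := by
    intro σ hσ
    refine ⟨hL hσ, ?_⟩
    rw [hUcoe]
    intro v hv
    exact Set.mem_biUnion hσ hv
  obtain ⟨v, hv, -, heq⟩ := hX.2 U hUverts hUcard L hLind hLdc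
  refine ⟨v, hv, fun σ hσ => ?_⟩
  have : σ ∈ X.link v ∩ X.induced (U : Set V) := heq.symm ▸ hσ
  exact this.1.2.2
end

section
/- Let K be an r-conic simplicial complex, let t ≥ 1 be an integer, and let v₁, v₂, …, v_t be vertexes of K. Then the intersection S = ⋂_{i=1}^t St_K(v_i) of their closed stars is an (r−t)-conic simplicial complex. In particular, if t ≤ r then S is nonempty. -/
open SComplex in
/-- in an `r`-conic complex, the intersection of the closed stars of `t`
vertexes is `(r-t)`-conic; in particular it is nonempty when `t ≤ r`. -/
theorem stmt9 {V : Type*} [DecidableEq V] (K : SComplex V) (r t : ℕ) (ht : 1 ≤ t)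
    (hK : K.Conic r) (v : Fin t → V) (hv : ∀ i, v i ∈ K.verts) :
    (t ≤ r → (K.starsInter v).Conic (r - t)) ∧
      (t ≤ r → (K.starsInter v).faces.Nonempty) := by
  have key : t ≤ r → ∀ L : Set (Finset V), L ⊆ (K.starsInter v).faces → DownClosed L →
      (vertsOf L).Finite → (vertsOf L).ncard ≤ r - t →
      ∃ w ∈ (K.starsInter v).verts, ∀ σ ∈ L, insert w σ ∈ (K.starsInter v).faces := by
    intro htr L hL1 hL2 hL3 hL4
    set E : Set V := vertsOf L ∪ Set.range v with hE
    set L' : Set (Finset V) := {τ | τ ∈ K.faces ∧ (τ : Set V) ⊆ E} with hL'def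
    have hL'sub : L' ⊆ K.faces := fun τ h => h.1
    have hL'dc : DownClosed L' := fun τ hτ ρ hρ hne =>
      ⟨K.down_closed hτ.1 hρ hne, (Finset.coe_subset.mpr hρ).trans hτ.2⟩
    have hvertsL' : vertsOf L' ⊆ E := by
      intro x hx
      simp only [vertsOf, Set.mem_iUnion] at hx
      obtain ⟨σ, hσ, hxσ⟩ := hx
      exact hσ.2 hxσ
    have hEfin : E.Finite := hL3.union (Set.finite_range v)
    have hEcard : E.ncard ≤ r := by
      have h1 : (Set.range v).ncard ≤ t := by
        rw [show Set.range v = ↑(Finset.univ.image v) by simp, Set.ncard_coe_finset]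
        exact Finset.card_image_le.trans (by simp)
      calc E.ncard ≤ (vertsOf L).ncard + (Set.range v).ncard := Set.ncard_union_le _ _
        _ ≤ (r - t) + t := Nat.add_le_add hL4 h1
        _ ≤ r := by omega
    obtain ⟨w, hw, hwst⟩ := hK.2 L' hL'sub hL'dc (hEfin.subset hvertsL')
      (le_trans (Set.ncard_le_ncard hvertsL' hEfin) hEcard)
    have hvi : ∀ i, ({v i} : Finset V) ∈ L' := by
      intro i
      refine ⟨hv i, ?_⟩
      intro x hx
      simp only [Finset.coe_singleton, Set.mem_singleton_iff] at hx
      exact hx ▸ Set.mem_union_right _ ⟨i, rfl⟩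
    have hLL' : ∀ σ ∈ L, σ ∈ L' := by
      intro σ hσ
      exact ⟨(hL1 hσ).1, (Set.subset_biUnion_of_mem hσ).trans Set.subset_union_left⟩
    have hwS : w ∈ (K.starsInter v).verts := by
      refine ⟨hw, fun i => ?_⟩
      have := hwst _ (hvi i)
      rwa [show insert w {v i} = insert (v i) {w} by
        rw [Finset.pair_comm]] at this
    refine ⟨w, hwS, fun σ hσ => ?_⟩
    refine ⟨hwst σ (hLL' σ hσ), fun i => ?_⟩
    have hins : insert (v i) σ ∈ L' := by
      refine ⟨(hL1 hσ).2 i, ?_⟩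
      rw [Finset.coe_insert]
      exact Set.insert_subset (Set.mem_union_right _ ⟨i, rfl⟩) (hLL' σ hσ).2
    have := hwst _ hins
    rwa [Finset.insert_comm] at this
  have hne : t ≤ r → (K.starsInter v).faces.Nonempty := by
    intro htr
    obtain ⟨w, hw, -⟩ := key htr ∅ (by simp) (fun σ h => h.elim)
      (by simp [vertsOf]) (by simp [vertsOf])
    exact ⟨{w}, hw⟩
  exact ⟨fun htr => ⟨hne htr, key htr⟩, hne⟩
end

section
/- There exists an ∞-ample simplicial complex whose vertex set is countably infinite; namely, the complex X = ⋃_{n≥0} X_n, where X_0 is a single vertex and X_{n+1} is obtained from X_n by attaching, for every subcomplex A ⊆ X_n (including A = ∅), a cone v(A) ∗ A with a new apex vertex v(A) and base A, is ∞-ample. -/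
section AmpleConstruction

open SComplex

/-- An equivalence used to give each vertex `v+1` a "code": a stage number and a
finite family of finite sets (the intended base of the cone at `v+1`). -/
noncomputable def eqvC : (ℕ × Finset (Finset ℕ)) ≃ ℕ := Denumerable.eqv _

/-- The code of vertex `v+1`. -/
noncomputable def codeC (v : ℕ) : ℕ × Finset (Finset ℕ) := eqvC.symm v

/-- The rank (birth stage) of a vertex. -/
noncomputable def rkC : ℕ → ℕ
  | 0 => 0
  | (v+1) => (codeC v).1 + 1

/-- The faces of the `n`-th stage complex `X_n`. Stage `0` is a single vertex `0`;
stage `n+1` attaches, for every vertex `v+1` of rank `n+1`, a cone with apex `v+1`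
over the subcomplex of `X_n` coded by `(codeC v).2`. -/
noncomputable def FC : ℕ → Set (Finset ℕ)
  | 0 => {{0}}
  | (n+1) => FC n ∪ {ρ | ∃ v, (codeC v).1 = n ∧
      (ρ = {v+1} ∨ ∃ σ ∈ FC n,
        (∀ τ ⊆ σ, τ.Nonempty → τ ∈ (codeC v).2) ∧ ρ = insert (v+1) σ)}

theorem FC_mono : Monotone FC := by
  apply monotone_nat_of_le_succ
  intro n σ hσ
  exact Or.inl hσ

theorem FC_nonempty : ∀ m, ∀ σ ∈ FC m, σ.Nonempty := by
  intro m
  induction m with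
  | zero => rintro σ rfl; exact ⟨0, Finset.mem_singleton_self 0⟩
  | succ n ih =>
    rintro σ (hσ | ⟨v, hv, (rfl | ⟨τ, hτ, hcond, rfl⟩)⟩)
    · exact ih σ hσ
    · exact ⟨v+1, Finset.mem_singleton_self _⟩
    · exact ⟨v+1, Finset.mem_insert_self _ _⟩

theorem FC_down : ∀ m, ∀ σ ∈ FC m, ∀ τ, τ ⊆ σ → τ.Nonempty → τ ∈ FC m := by
  intro m
  induction m with
  | zero =>
    rintro σ rfl τ hsub hne
    have : τ = {0} := Finset.Nonempty.subset_singleton_iff hne |>.mp hsub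
    exact this ▸ rfl
  | succ n ih =>
    rintro σ (hσ | ⟨v, hv, (rfl | ⟨ρ, hρ, hcond, rfl⟩)⟩) τ hsub hne
    · exact Or.inl (ih σ hσ τ hsub hne)
    · have : τ = {v+1} := Finset.Nonempty.subset_singleton_iff hne |>.mp hsub
      exact Or.inr ⟨v, hv, Or.inl this⟩
    · by_cases hvτ : v+1 ∈ τ
      · by_cases hne' : (τ.erase (v+1)).Nonempty
        · have hsub' : τ.erase (v+1) ⊆ ρ := by
            intro x hx
            have hx1 := Finset.mem_of_mem_erase hx
            have hx2 := Finset.ne_of_mem_erase hx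
            rcases Finset.mem_insert.mp (hsub hx1) with h | h
            · exact absurd h hx2
            · exact h
          refine Or.inr ⟨v, hv, Or.inr ⟨τ.erase (v+1), ih ρ hρ _ hsub' hne', ?_, ?_⟩⟩
          · intro π hπ hπne; exact hcond π (hπ.trans hsub') hπne
          · exact (Finset.insert_erase hvτ).symm
        · have : τ = {v+1} := by
            rw [Finset.not_nonempty_iff_eq_empty] at hne'
            ext x
            simp only [Finset.mem_singleton]
            constructor
            · intro hx
              by_contra hne''
              exact absurd (Finset.mem_erase.mpr ⟨hne'', hx⟩) (by simp [hne'])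
            · rintro rfl; exact hvτ
          exact Or.inr ⟨v, hv, Or.inl this⟩
      · have hsub' : τ ⊆ ρ := by
          intro x hx
          rcases Finset.mem_insert.mp (hsub hx) with h | h
          · exact absurd (h ▸ hx) hvτ
          · exact h
        exact Or.inl (ih ρ hρ τ hsub' hne)

theorem rk_le : ∀ m, ∀ σ ∈ FC m, ∀ w ∈ σ, rkC w ≤ m := by
  intro m
  induction m with
  | zero =>
    rintro σ rfl w hw
    rw [Finset.mem_singleton] at hw
    subst hw; rfl
  | succ n ih =>
    rintro σ (hσ | ⟨v, hv, (rfl | ⟨ρ, hρ, hcond, rfl⟩)⟩) w hw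
    · exact (ih σ hσ w hw).trans (Nat.le_succ n)
    · rw [Finset.mem_singleton] at hw
      subst hw
      simp [rkC, hv]
    · rcases Finset.mem_insert.mp hw with rfl | h
      · simp [rkC, hv]
      · exact (ih ρ hρ w h).trans (Nat.le_succ n)

theorem FC_of_rk (n : ℕ) : ∀ m, ∀ σ ∈ FC m, (∀ w ∈ σ, rkC w ≤ n) → σ ∈ FC n := by
  intro m
  induction m with
  | zero =>
    rintro σ rfl _
    exact FC_mono (Nat.zero_le n) rfl
  | succ m ih =>
    rintro σ hσ hrk
    rcases hσ with hσ | ⟨v, hv, hcase⟩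
    · exact ih σ hσ hrk
    · have hmem : v+1 ∈ σ := by
        rcases hcase with rfl | ⟨ρ, _, _, rfl⟩
        · exact Finset.mem_singleton_self _
        · exact Finset.mem_insert_self _ _
      have h1 : m + 1 ≤ n := by
        have := hrk _ hmem
        simpa [rkC, hv] using this
      exact FC_mono h1 (Or.inr ⟨v, hv, hcase⟩)

theorem FC_key : ∀ m, ∀ σ ∈ FC m, ∀ v, v+1 ∈ σ → (∀ w ∈ σ, rkC w ≤ rkC (v+1)) →
    σ = {v+1} ∨ (σ.erase (v+1) ∈ FC (codeC v).1 ∧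
      ∀ τ ⊆ σ.erase (v+1), τ.Nonempty → τ ∈ (codeC v).2) := by
  intro m
  induction m with
  | zero =>
    rintro σ rfl v hv _
    rw [Finset.mem_singleton] at hv
    exact absurd hv (by omega)
  | succ n ih =>
    rintro σ (hσ | ⟨w, hw, (rfl | ⟨ρ, hρ, hcond, rfl⟩)⟩) v hv hrk
    · exact ih σ hσ v hv hrk
    · rw [Finset.mem_singleton] at hv
      exact Or.inl (by rw [hv])
    · rcases Finset.mem_insert.mp hv with heq | hmem
      · have hvw : v = w := Nat.succ_injective heq
        subst hvw
        have hnotin : v+1 ∉ ρ := by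
          intro h
          have := rk_le n ρ hρ _ h
          simp [rkC, hw] at this
        rw [Finset.erase_insert hnotin]
        exact Or.inr ⟨hw ▸ hρ, hcond⟩
      · exfalso
        have h1 : rkC (v+1) ≤ n := rk_le n ρ hρ _ hmem
        have h2 : rkC (w+1) ≤ rkC (v+1) := hrk _ (Finset.mem_insert_self _ _)
        simp only [rkC, hw] at h1 h2
        omega

/-- The ∞-ample complex: union of all the stages. -/
noncomputable def Xample : SComplex ℕ where
  faces := ⋃ n, FC n
  nonempty_of_mem := by
    intro σ hσ
    obtain ⟨n, hn⟩ := Set.mem_iUnion.mp hσ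
    exact FC_nonempty n σ hn
  down_closed := by
    intro σ hσ τ hτ hne
    obtain ⟨n, hn⟩ := Set.mem_iUnion.mp hσ
    exact Set.mem_iUnion.mpr ⟨n, FC_down n σ hn τ hτ hne⟩

theorem Xample_verts : Xample.verts = Set.univ := by
  ext w
  simp only [Set.mem_univ, iff_true]
  show {w} ∈ ⋃ n, FC n
  rcases w with _ | v
  · exact Set.mem_iUnion.mpr ⟨0, rfl⟩
  · exact Set.mem_iUnion.mpr ⟨(codeC v).1 + 1, Or.inr ⟨v, rfl, Or.inl rfl⟩⟩

end AmpleConstruction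

open SComplex in
/-- there exists an `∞`-ample simplicial complex with countably infinite
vertex set. -/
theorem stmt10 :
    ∃ X : SComplex ℕ, X.verts.Countable ∧ X.verts.Infinite ∧
      ∀ r : ℕ, 1 ≤ r → X.Ample r := by
  classical
  refine ⟨Xample, Set.to_countable _, by rw [Xample_verts]; exact Set.infinite_univ, ?_⟩
  intro r _
  constructor
  · exact ⟨{0}, Set.mem_iUnion.mpr ⟨0, rfl⟩⟩
  intro U _ _ A hA hdc
  set n : ℕ := U.sup rkC with hn
  set A' : Finset (Finset ℕ) := U.powerset.filter (· ∈ A) with hA'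
  set c : ℕ := eqvC (n, A') with hc
  have hcode : codeC c = (n, A') := Equiv.symm_apply_apply _ _
  have hrkc : rkC (c+1) = n + 1 := by simp [rkC, hcode]
  have hAA' : ∀ σ, σ ∈ A ↔ σ ∈ A' := by
    intro σ
    constructor
    · intro h
      have h2 := hA h
      refine Finset.mem_filter.mpr ⟨Finset.mem_powerset.mpr ?_, h⟩
      exact Finset.coe_subset.mp h2.2
    · intro h
      exact (Finset.mem_filter.mp h).2
  have hrkU : ∀ w ∈ U, rkC w ≤ n := fun w hw => Finset.le_sup hw
  have hcU : c+1 ∉ U := by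
    intro h
    have := hrkU _ h
    omega
  refine ⟨c+1, by rw [Xample_verts]; trivial, hcU, ?_⟩
  ext σ
  constructor
  · rintro ⟨⟨hf, hnotin, hins⟩, hfI, hsubU⟩
    obtain ⟨m, hm⟩ := Set.mem_iUnion.mp hins
    have hsubU' : σ ⊆ U := Finset.coe_subset.mp hsubU
    have hkey := FC_key m _ hm c (Finset.mem_insert_self _ _) ?_
    · rcases hkey with heq | ⟨_, h2⟩
      · exfalso
        obtain ⟨x, hx⟩ := Xample.nonempty_of_mem hf
        have : x ∈ ({c+1} : Finset ℕ) := heq ▸ Finset.mem_insert_of_mem hx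
        rw [Finset.mem_singleton] at this
        exact hcU (this ▸ hsubU' hx)
      · rw [Finset.erase_insert hnotin] at h2
        have : σ ∈ (codeC c).2 :=
          h2 σ (subset_refl σ) (Xample.nonempty_of_mem hf)
        rw [hcode] at this
        exact (hAA' σ).mpr this
    · intro w hw
      rcases Finset.mem_insert.mp hw with rfl | h
      · exact le_refl _
      · rw [hrkc]; exact (hrkU w (hsubU' h)).trans (Nat.le_succ n)
  · intro hσA
    obtain ⟨hf, hsub⟩ := hA hσA
    have hsubU' : σ ⊆ U := Finset.coe_subset.mp hsub
    have hcσ : c+1 ∉ σ := fun h => hcU (hsubU' h)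
    have hσFn : σ ∈ FC n := by
      obtain ⟨m, hm⟩ := Set.mem_iUnion.mp hf
      exact FC_of_rk n m σ hm (fun w hw => hrkU w (hsubU' hw))
    have hins : insert (c+1) σ ∈ Xample.faces := by
      refine Set.mem_iUnion.mpr ⟨n+1, Or.inr ⟨c, by rw [hcode], Or.inr ⟨σ, hσFn, ?_, rfl⟩⟩⟩
      intro τ hτ hτne
      rw [hcode]
      exact (hAA' τ).mp (hdc hσA hτ hτne)
    exact ⟨⟨hf, hcσ, hins⟩, hf, hsub⟩
end

section
/- Any two ∞-ample simplicial complexes with countably infinite vertex sets are isomorphic as simplicial complexes. -/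
section StmtEleven

open Finset in
private lemma pull_image {V W : Type} [DecidableEq V] [DecidableEq W]
    {f : V → W} {σ : Finset V} {τ : Finset W} (hτ : τ ⊆ σ.image f) :
    (σ.filter (fun v => f v ∈ τ)).image f = τ := by
  apply Finset.Subset.antisymm
  · intro w hw
    simp only [Finset.mem_image, Finset.mem_filter] at hw
    obtain ⟨v, ⟨_, hv2⟩, rfl⟩ := hw
    exact hv2
  · intro w hw
    obtain ⟨v, hv, rfl⟩ := Finset.mem_image.mp (hτ hw)
    exact Finset.mem_image.mpr ⟨v, Finset.mem_filter.mpr ⟨hv, hw⟩, rfl⟩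

private lemma image_inj {V W : Type} [DecidableEq V] [DecidableEq W]
    {f : V → W} {U σ τ : Finset V} (hinj : Set.InjOn f (U : Set V))
    (hσ : σ ⊆ U) (hτ : τ ⊆ U) (h : σ.image f = τ.image f) : σ = τ := by
  have := (hinj.image_eq_image_iff (Finset.coe_subset.mpr hσ) (Finset.coe_subset.mpr hτ)).mp
  rw [← Finset.coe_image, ← Finset.coe_image] at this
  exact_mod_cast Finset.coe_inj.mp (this (by exact_mod_cast h))

/-- A partial isomorphism between complexes: an injection on a finite set of vertexes
carrying simplexes to simplexes in both directions. -/
structure SComplex.PIso {V W : Type} [DecidableEq V] [DecidableEq W]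
    (X : SComplex V) (Y : SComplex W) where
  U : Finset V
  f : V → W
  hU : (U : Set V) ⊆ X.verts
  hV : ∀ v ∈ U, f v ∈ Y.verts
  inj : Set.InjOn f (U : Set V)
  iso : ∀ σ : Finset V, σ ⊆ U → (σ ∈ X.faces ↔ σ.image f ∈ Y.faces)

namespace SComplex.PIso

variable {V W : Type} [DecidableEq V] [DecidableEq W] {X : SComplex V} {Y : SComplex W}

/-- Key extension step: given a partial isomorphism, a new vertex `x` of `X`, and a
candidate link subcomplex condition provided by ampleness of `Y`, extend. -/
private lemma extend_core (P : PIso X Y) {x : V} {y : W}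
    (hx : x ∈ X.verts) (hxU : x ∉ P.U) (hy : y ∈ Y.verts) (hyU : y ∉ P.U.image P.f)
    (key : ∀ σ : Finset V, σ ⊆ P.U → σ.Nonempty →
      (insert x σ ∈ X.faces ↔ insert y (σ.image P.f) ∈ Y.faces)) :
    ∃ Q : PIso X Y, Q.U = insert x P.U ∧ Q.f = Function.update P.f x y := by
  set f' := Function.update P.f x y with hf'
  have hfx : f' x = y := Function.update_self x y P.f
  have hfv : ∀ v ∈ P.U, f' v = P.f v := by
    intro v hv
    apply Function.update_of_ne
    rintro rfl
    exact hxU hv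
  have himg : ∀ σ : Finset V, σ ⊆ P.U → σ.image f' = σ.image P.f := by
    intro σ hσ
    exact Finset.image_congr (fun v hv => hfv v (hσ hv))
  refine ⟨⟨insert x P.U, f', ?_, ?_, ?_, ?_⟩, rfl, rfl⟩
  · intro v hv
    rcases Finset.mem_insert.mp (by exact_mod_cast hv) with rfl | hv
    · exact hx
    · exact P.hU hv
  · intro v hv
    rcases Finset.mem_insert.mp hv with rfl | hv
    · rw [hfx]; exact hy
    · rw [hfv v hv]; exact P.hV v hv
  · intro v hv w hw hvw
    rcases Finset.mem_insert.mp (by exact_mod_cast hv) with rfl | hv' <;>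
      rcases Finset.mem_insert.mp (by exact_mod_cast hw) with h | hw'
    · exact h.symm
    · exfalso
      rw [hfx, hfv w hw'] at hvw
      exact hyU (hvw ▸ Finset.mem_image_of_mem P.f hw')
    · exfalso
      subst h
      rw [hfx, hfv v hv'] at hvw
      exact hyU (hvw ▸ Finset.mem_image_of_mem P.f hv')
    · exact P.inj hv' hw' (by rwa [hfv v hv', hfv w hw'] at hvw)
  · intro σ hσ
    by_cases hxσ : x ∈ σ
    · -- σ = insert x σ₀
      set σ₀ := σ.erase x with hσ₀
      have hσeq : σ = insert x σ₀ := (Finset.insert_erase hxσ).symm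
      have hσ₀U : σ₀ ⊆ P.U := by
        intro v hv
        have := hσ (Finset.mem_of_mem_erase hv)
        rcases Finset.mem_insert.mp this with rfl | h
        · exact absurd rfl (Finset.ne_of_mem_erase hv)
        · exact h
      have hximg : σ.image f' = insert y (σ₀.image P.f) := by
        rw [hσeq, Finset.image_insert, hfx, himg σ₀ hσ₀U]
      rcases σ₀.eq_empty_or_nonempty with h0 | h0
      · have hσx : σ = {x} := by rw [hσeq, h0]; rfl
        rw [hσx] at hximg ⊢
        rw [hximg, h0, Finset.image_empty]
        constructor
        · intro _; exact hy
        · intro _; exact hx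
      · rw [hximg]
        rw [hσeq]
        exact key σ₀ hσ₀U h0
    · have hσU : σ ⊆ P.U := fun v hv =>
        (Finset.mem_insert.mp (hσ hv)).resolve_left (fun h => hxσ (h ▸ hv))
      rw [himg σ hσU]
      exact P.iso σ hσU

/-- Forward extension: add any vertex `x` of `X` to the domain. -/
private lemma ext_fwd (P : PIso X Y) (hY : ∀ r : ℕ, 1 ≤ r → Y.Ample r)
    {x : V} (hx : x ∈ X.verts) (hxU : x ∉ P.U) :
    ∃ Q : PIso X Y, P.U ⊆ Q.U ∧ (∀ v ∈ P.U, Q.f v = P.f v) ∧ x ∈ Q.U := by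
  classical
  set U' : Finset W := P.U.image P.f with hU'
  set A : Set (Finset W) :=
    (fun σ : Finset V => σ.image P.f) '' (X.link x ∩ X.induced (P.U : Set V)) with hA
  have hU'sub : (U' : Set W) ⊆ Y.verts := by
    intro w hw
    obtain ⟨v, hv, rfl⟩ := Finset.mem_image.mp (by exact_mod_cast hw)
    exact P.hV v hv
  have hAsub : A ⊆ Y.induced (U' : Set W) := by
    rintro τ ⟨σ, ⟨⟨hσf, _, _⟩, _, hσU⟩, rfl⟩
    have hσU' : σ ⊆ P.U := by exact_mod_cast hσU
    refine ⟨(P.iso σ hσU').mp hσf, ?_⟩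
    rw [hU']
    exact_mod_cast Finset.image_subset_image hσU' 
  have hAdc : DownClosed A := by
    rintro τ ⟨σ, ⟨⟨hσf, hxσ, hins⟩, _, hσU⟩, rfl⟩ τ' hτ' hτ'ne
    have hσU' : σ ⊆ P.U := by exact_mod_cast hσU
    set σ' := σ.filter (fun v => P.f v ∈ τ') with hσ'
    have hσ'σ : σ' ⊆ σ := Finset.filter_subset _ _
    have himg : σ'.image P.f = τ' := pull_image hτ'
    have hσ'ne : σ'.Nonempty := by
      rcases hτ'ne with ⟨w, hw⟩
      rw [← himg] at hw
      obtain ⟨v, hv, _⟩ := Finset.mem_image.mp hw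
      exact ⟨v, hv⟩
    refine ⟨σ', ⟨⟨X.down_closed hσf hσ'σ hσ'ne, fun h => hxσ (hσ'σ h), ?_⟩,
      X.down_closed hσf hσ'σ hσ'ne, ?_⟩, himg⟩
    · exact X.down_closed hins (Finset.insert_subset_insert _ hσ'σ)
        ⟨x, Finset.mem_insert_self _ _⟩
    · exact_mod_cast Finset.coe_subset.mpr (hσ'σ.trans hσU')
  obtain ⟨y, hy, hyU', hlink⟩ :=
    (hY (U'.card + 1) (Nat.le_add_left 1 _)).2 U' hU'sub (Nat.le_succ _) A hAsub hAdc
  have hyU : y ∉ P.U.image P.f := hyU'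
  have key : ∀ σ : Finset V, σ ⊆ P.U → σ.Nonempty →
      (insert x σ ∈ X.faces ↔ insert y (σ.image P.f) ∈ Y.faces) := by
    intro σ hσU hσne
    have h1 : insert x σ ∈ X.faces ↔ σ.image P.f ∈ A := by
      constructor
      · intro h
        have hxσ : x ∉ σ := fun hc => hxU (hσU hc)
        have hσf : σ ∈ X.faces := X.down_closed h (Finset.subset_insert x σ) hσne
        exact ⟨σ, ⟨⟨hσf, hxσ, h⟩, hσf, by exact_mod_cast hσU⟩, rfl⟩
      · rintro ⟨σ₁, ⟨⟨_, _, hins⟩, _, hσ₁U⟩, heq⟩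
        have : σ₁ = σ := image_inj P.inj (by exact_mod_cast hσ₁U) hσU heq
        exact this ▸ hins
    have h2 : σ.image P.f ∈ A ↔ insert y (σ.image P.f) ∈ Y.faces := by
      rw [← hlink]
      constructor
      · rintro ⟨⟨_, _, h⟩, _⟩; exact h
      · intro h
        have himgne : (σ.image P.f).Nonempty := hσne.image P.f
        have hf : σ.image P.f ∈ Y.faces :=
          Y.down_closed h (Finset.subset_insert _ _) himgne
        refine ⟨⟨hf, fun hc => hyU ((Finset.mem_image.mp hc).elim
          (fun v hv => Finset.mem_image.mpr ⟨v, hσU hv.1, hv.2⟩)), h⟩, hf, ?_⟩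
        rw [hU']
        exact_mod_cast Finset.image_subset_image hσU
    exact h1.trans h2
  obtain ⟨Q, hQU, hQf⟩ := P.extend_core hx hxU hy hyU key
  refine ⟨Q, hQU ▸ Finset.subset_insert x P.U, ?_, hQU ▸ Finset.mem_insert_self x P.U⟩
  intro v hv
  rw [hQf]
  apply Function.update_of_ne
  rintro rfl
  exact hxU hv

/-- Backward extension: add any vertex `y` of `Y` to the range. -/
private lemma ext_bwd (P : PIso X Y) (hX : ∀ r : ℕ, 1 ≤ r → X.Ample r)
    {y : W} (hy : y ∈ Y.verts) (hyU : y ∉ P.U.image P.f) :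
    ∃ Q : PIso X Y, P.U ⊆ Q.U ∧ (∀ v ∈ P.U, Q.f v = P.f v) ∧ y ∈ Q.U.image Q.f := by
  classical
  set A : Set (Finset V) :=
    {σ | σ ∈ X.faces ∧ (σ : Set V) ⊆ (P.U : Set V) ∧ insert y (σ.image P.f) ∈ Y.faces}
    with hA
  have hAsub : A ⊆ X.induced (P.U : Set V) := fun σ hσ => ⟨hσ.1, hσ.2.1⟩
  have hAdc : DownClosed A := by
    rintro σ ⟨hσf, hσU, hσy⟩ σ' hσ' hσ'ne
    refine ⟨X.down_closed hσf hσ' hσ'ne, fun v hv => hσU (hσ' hv), ?_⟩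
    exact Y.down_closed hσy
      (Finset.insert_subset_insert _ (Finset.image_subset_image hσ'))
      ⟨y, Finset.mem_insert_self _ _⟩
  obtain ⟨x, hx, hxU, hlink⟩ :=
    (hX (P.U.card + 1) (Nat.le_add_left 1 _)).2 P.U P.hU (Nat.le_succ _) A hAsub hAdc
  have key : ∀ σ : Finset V, σ ⊆ P.U → σ.Nonempty →
      (insert x σ ∈ X.faces ↔ insert y (σ.image P.f) ∈ Y.faces) := by
    intro σ hσU hσne
    have h1 : insert x σ ∈ X.faces ↔ σ ∈ X.link x ∩ X.induced (P.U : Set V) := by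
      constructor
      · intro h
        have hσf : σ ∈ X.faces := X.down_closed h (Finset.subset_insert x σ) hσne
        exact ⟨⟨hσf, fun hc => hxU (hσU hc), h⟩, hσf, by exact_mod_cast hσU⟩
      · rintro ⟨⟨_, _, h⟩, _⟩; exact h
    rw [h1, hlink]
    constructor
    · rintro ⟨_, _, h⟩; exact h
    · intro h
      have hf : σ.image P.f ∈ Y.faces :=
        Y.down_closed h (Finset.subset_insert _ _) (hσne.image P.f)
      exact ⟨(P.iso σ hσU).mpr hf, by exact_mod_cast hσU, h⟩
  obtain ⟨Q, hQU, hQf⟩ := P.extend_core hx hxU hy hyU key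
  refine ⟨Q, hQU ▸ Finset.subset_insert x P.U, ?_, ?_⟩
  · intro v hv
    rw [hQf]
    apply Function.update_of_ne
    rintro rfl
    exact hxU hv
  · refine Finset.mem_image.mpr ⟨x, hQU ▸ Finset.mem_insert_self x P.U, ?_⟩
    rw [hQf]
    exact Function.update_self x y P.f

/-- Combined absorption step: extend the partial isomorphism so that `x` is in its
domain and `y` in its range. -/
private lemma absorb (P : PIso X Y) (hX : ∀ r : ℕ, 1 ≤ r → X.Ample r)
    (hY : ∀ r : ℕ, 1 ≤ r → Y.Ample r) {x : V} {y : W}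
    (hx : x ∈ X.verts) (hy : y ∈ Y.verts) :
    ∃ Q : PIso X Y, P.U ⊆ Q.U ∧ (∀ v ∈ P.U, Q.f v = P.f v) ∧
      x ∈ Q.U ∧ y ∈ Q.U.image Q.f := by
  obtain ⟨P1, hP1U, hP1f, hxP1⟩ :
      ∃ Q : PIso X Y, P.U ⊆ Q.U ∧ (∀ v ∈ P.U, Q.f v = P.f v) ∧ x ∈ Q.U := by
    by_cases h : x ∈ P.U
    · exact ⟨P, Finset.Subset.refl _, fun _ _ => rfl, h⟩
    · exact P.ext_fwd hY hx h
  by_cases h : y ∈ P1.U.image P1.f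
  · exact ⟨P1, hP1U, hP1f, hxP1, h⟩
  · obtain ⟨Q, hQU, hQf, hyQ⟩ := P1.ext_bwd hX hy h
    exact ⟨Q, hP1U.trans hQU, fun v hv => (hQf v (hP1U hv)).trans (hP1f v hv),
      hQU hxP1, hyQ⟩

/-- The empty partial isomorphism. -/
private def empty (X : SComplex V) (Y : SComplex W) (w0 : W) : PIso X Y where
  U := ∅
  f := fun _ => w0
  hU := by simp
  hV := by simp
  inj := by simp [Set.InjOn]
  iso := by
    intro σ hσ
    rw [Finset.subset_empty.mp hσ]
    simp only [Finset.image_empty]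
    constructor
    · intro h; exact absurd (X.nonempty_of_mem h) (by simp)
    · intro h; exact absurd (Y.nonempty_of_mem h) (by simp)

end SComplex.PIso

end StmtEleven

open SComplex in
/-- any two `∞`-ample complexes with countably infinite vertex sets are
isomorphic. -/
theorem stmt11 {V W : Type} [DecidableEq V] [DecidableEq W]
    (X : SComplex V) (Y : SComplex W)
    (hXc : X.verts.Countable) (hXi : X.verts.Infinite)
    (hYc : Y.verts.Countable) (hYi : Y.verts.Infinite)
    (hX : ∀ r : ℕ, 1 ≤ r → X.Ample r) (hY : ∀ r : ℕ, 1 ≤ r → Y.Ample r) :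
    ∃ f : V → W, IsIso f X Y := by
  classical
  obtain ⟨a, ha⟩ := hXc.exists_eq_range hXi.nonempty
  obtain ⟨b, hb⟩ := hYc.exists_eq_range hYi.nonempty
  have haX : ∀ n, a n ∈ X.verts := fun n => ha ▸ Set.mem_range_self n
  have hbY : ∀ n, b n ∈ Y.verts := fun n => hb ▸ Set.mem_range_self n
  obtain ⟨w0, hw0⟩ := hYi.nonempty
  -- the chain of partial isomorphisms
  let P : ℕ → PIso X Y := fun n =>
    Nat.rec (PIso.empty X Y w0)
      (fun n Pn => (Pn.absorb hX hY (haX n) (hbY n)).choose) n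
  have hstep : ∀ n, (P n).U ⊆ (P (n + 1)).U ∧
      (∀ v ∈ (P n).U, (P (n + 1)).f v = (P n).f v) ∧
      a n ∈ (P (n + 1)).U ∧ b n ∈ (P (n + 1)).U.image (P (n + 1)).f :=
    fun n => ((P n).absorb hX hY (haX n) (hbY n)).choose_spec
  have hmono : ∀ m n, m ≤ n → (P m).U ⊆ (P n).U := by
    intro m n h
    induction n with
    | zero => rw [Nat.le_zero.mp h]
    | succ n ih =>
      rcases Nat.lt_or_ge m (n + 1) with h' | h'
      · exact (ih (Nat.lt_succ_iff.mp h')).trans (hstep n).1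
      · rw [Nat.le_antisymm h h']
  have hagree : ∀ m n, m ≤ n → ∀ v ∈ (P m).U, (P n).f v = (P m).f v := by
    intro m n h
    induction n with
    | zero => rw [Nat.le_zero.mp h]; exact fun _ _ => rfl
    | succ n ih =>
      rcases Nat.lt_or_ge m (n + 1) with h' | h'
      · intro v hv
        have h'' := Nat.lt_succ_iff.mp h'
        rw [(hstep n).2.1 v (hmono m n h'' hv)]
        exact ih h'' v hv
      · rw [Nat.le_antisymm h h']; exact fun _ _ => rfl
  -- the limit map
  let f : V → W := fun v =>
    if h : ∃ n, v ∈ (P n).U then (P (Nat.find h)).f v else w0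
  have hf : ∀ n, ∀ v ∈ (P n).U, f v = (P n).f v := by
    intro n v hv
    have h : ∃ m, v ∈ (P m).U := ⟨n, hv⟩
    show dite _ _ _ = _
    rw [dif_pos h]
    rcases le_total (Nat.find h) n with h' | h'
    · exact (hagree (Nat.find h) n h' v (Nat.find_spec h)).symm
    · exact hagree n (Nat.find h) h' v hv
  have hdom : ∀ v ∈ X.verts, ∃ n, v ∈ (P n).U := by
    intro v hv
    rw [ha] at hv
    obtain ⟨n, rfl⟩ := hv
    exact ⟨n + 1, (hstep n).2.2.1⟩
  refine ⟨f, ⟨⟨?_, ?_, ?_⟩, ?_⟩⟩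
  · -- MapsTo
    intro v hv
    obtain ⟨n, hn⟩ := hdom v hv
    rw [hf n v hn]
    exact (P n).hV v hn
  · -- InjOn
    intro v hv v' hv' hvv'
    obtain ⟨n, hn⟩ := hdom v hv
    obtain ⟨m, hm⟩ := hdom v' hv'
    have hn' : v ∈ (P (max n m)).U := hmono n _ (le_max_left n m) hn
    have hm' : v' ∈ (P (max n m)).U := hmono m _ (le_max_right n m) hm
    rw [hf _ v hn', hf _ v' hm'] at hvv'
    exact (P (max n m)).inj hn' hm' hvv'
  · -- SurjOn
    intro w hw
    rw [hb] at hw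
    obtain ⟨n, rfl⟩ := hw
    obtain ⟨v, hv, hvw⟩ := Finset.mem_image.mp (hstep n).2.2.2
    exact ⟨v, (P (n + 1)).hU hv, by rw [hf (n + 1) v hv]; exact hvw⟩
  · -- faces
    intro σ hσ
    have : ∃ N, σ ⊆ (P N).U := by
      induction σ using Finset.induction with
      | empty => exact ⟨0, Finset.empty_subset _⟩
      | @insert v τ hvτ ih =>
        obtain ⟨N, hN⟩ := ih ((Set.subset_insert _ _).trans
          (by rw [Finset.coe_insert] at hσ; exact hσ))
        obtain ⟨M, hM⟩ := hdom v (hσ (by simp))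
        exact ⟨max M N, Finset.insert_subset
          (hmono M _ (le_max_left M N) hM)
          (hN.trans (hmono N _ (le_max_right M N)))⟩
    obtain ⟨N, hN⟩ := this
    have himg : σ.image f = σ.image (P N).f :=
      Finset.image_congr (fun v hv => hf N v (hN hv))
    rw [himg]
    exact (P N).iso σ hN
end

section
/- Let X be an ∞-ample simplicial complex, let L be a finite simplicial complex and L' ⊆ L an induced subcomplex, let U' ⊆ V(X) be a finite subset, and let f' : L' → X_{U'} be an isomorphism of simplicial complexes. Then there exists a finite subset U ⊆ V(X) containing U' and an isomorphism f : L → X_U with f restricted to L' equal to f'. -/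
open SComplex in
lemma verts_inducedSub' {V : Type*} (X : SComplex V) (S : Set V) (hS : S ⊆ X.verts) :
    (X.inducedSub S).verts = S := by
  ext v
  simp only [SComplex.verts, SComplex.inducedSub, SComplex.induced, Set.mem_setOf_eq,
    Finset.coe_singleton, Set.singleton_subset_iff]
  exact ⟨fun h => h.2, fun hv => ⟨hS hv, hv⟩⟩

lemma mem_inducedSub' {V : Type*} (X : SComplex V) (U : Set V) (σ : Finset V) :
    σ ∈ (X.inducedSub U).faces ↔ σ ∈ X.faces ∧ (σ : Set V) ⊆ U := Iff.rfl

lemma finset_image_injOn_eq {A B : Type*} [DecidableEq B] {f : A → B} {s : Set A}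
    (hf : Set.InjOn f s) {a b : Finset A} (ha : (a : Set A) ⊆ s) (hb : (b : Set A) ⊆ s)
    (h : a.image f = b.image f) : a = b := by
  ext x
  constructor
  · intro hx
    have : f x ∈ b.image f := h ▸ Finset.mem_image_of_mem f hx
    obtain ⟨y, hy, hxy⟩ := Finset.mem_image.mp this
    rwa [hf (hb hy) (ha hx) hxy] at hy
  · intro hx
    have : f x ∈ a.image f := h ▸ Finset.mem_image_of_mem f hx
    obtain ⟨y, hy, hxy⟩ := Finset.mem_image.mp this
    rwa [hf (ha hy) (hb hx) hxy] at hy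

open SComplex in
/-- any isomorphism of an induced subcomplex `L'` of a finite complex `L`
onto an induced subcomplex `X_{U'}` of an `∞`-ample complex `X` extends to an
isomorphism of `L` onto an induced subcomplex `X_U` with `U ⊇ U'`. -/
theorem stmt12 {V : Type*} {VL : Type*} [DecidableEq V] [DecidableEq VL]
    (X : SComplex V) (hX : ∀ r : ℕ, 1 ≤ r → X.Ample r)
    (L : SComplex VL) (hL : L.verts.Finite)
    (S : Set VL) (hS : S ⊆ L.verts)
    (U' : Set V) (hU'fin : U'.Finite) (hU'v : U' ⊆ X.verts)
    (f' : VL → V) (hf' : IsIso f' (L.inducedSub S) (X.inducedSub U')) :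
    ∃ U : Set V, U.Finite ∧ U' ⊆ U ∧ U ⊆ X.verts ∧
      ∃ f : VL → V, IsIso f L (X.inducedSub U) ∧
        Set.EqOn f f' (L.inducedSub S).verts := by
  suffices key : ∀ n : ℕ, ∀ S : Set VL, S ⊆ L.verts → ∀ U' : Set V, U'.Finite → U' ⊆ X.verts →
      ∀ f' : VL → V, IsIso f' (L.inducedSub S) (X.inducedSub U') →
      (L.verts \ S).ncard ≤ n →
      ∃ U : Set V, U.Finite ∧ U' ⊆ U ∧ U ⊆ X.verts ∧
        ∃ f : VL → V, IsIso f L (X.inducedSub U) ∧ Set.EqOn f f' (L.inducedSub S).verts by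
    exact key (L.verts \ S).ncard S hS U' hU'fin hU'v f' hf' le_rfl
  clear hS hU'fin hU'v hf'
  intro n
  induction n with
  | zero =>
    intro S hS U' hU'fin hU'v f' hf' hcard
    have hfinDiff : (L.verts \ S).Finite := hL.subset Set.diff_subset
    have hempty : L.verts \ S = ∅ := by
      rw [← Set.ncard_eq_zero hfinDiff]; omega
    have hSL : S = L.verts := Set.Subset.antisymm hS (Set.diff_eq_empty.mp hempty)
    have hverts : (L.inducedSub S).verts = S := verts_inducedSub' L S hS
    refine ⟨U', hU'fin, Set.Subset.rfl, hU'v, f', ⟨?_, ?_⟩, fun _ _ => rfl⟩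
    · have := hf'.1
      rwa [hverts, hSL] at this
    · intro σ hσ
      have hσS : (σ : Set VL) ⊆ S := hSL ▸ hσ
      have := hf'.2 σ (by rw [hverts]; exact hσS)
      rw [mem_inducedSub'] at this
      exact Iff.trans (Iff.intro (fun h => ⟨h, hσS⟩) (fun h => h.1)) this
  | succ n ih =>
    intro S hS U' hU'fin hU'v f' hf' hcard
    by_cases hle : (L.verts \ S).ncard ≤ n
    · exact ih S hS U' hU'fin hU'v f' hf' hle
    push_neg at hle
    have hfinDiff : (L.verts \ S).Finite := hL.subset Set.diff_subset
    have hne : (L.verts \ S).Nonempty := by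
      rw [Set.nonempty_iff_ne_empty]
      intro h
      rw [h, Set.ncard_empty] at hle
      omega
    obtain ⟨w, hw⟩ := hne
    have hwL : w ∈ L.verts := hw.1
    have hwS : w ∉ S := hw.2
    have hvertsS : (L.inducedSub S).verts = S := verts_inducedSub' L S hS
    have hvertsU' : (X.inducedSub U').verts = U' := verts_inducedSub' X U' hU'v
    obtain ⟨hbij, hface⟩ := hf'
    rw [hvertsS, hvertsU'] at hbij
    have hface' : ∀ σ : Finset VL, (σ : Set VL) ⊆ S →
        ((σ ∈ L.faces ∧ (σ : Set VL) ⊆ S) ↔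
          (σ.image f' ∈ X.faces ∧ ((σ.image f' : Finset V) : Set V) ⊆ U')) := by
      intro σ hσ
      have := hface σ (by rw [hvertsS]; exact hσ)
      rwa [mem_inducedSub', mem_inducedSub'] at this
    classical
    set UF : Finset V := hU'fin.toFinset with hUFdef
    have hUFcoe : (UF : Set V) = U' := hU'fin.coe_toFinset
    obtain ⟨-, hamp⟩ := hX (UF.card + 1) (by omega)
    set A : Set (Finset V) :=
      {ρ | ∃ τ : Finset VL, τ ∈ L.faces ∧ (τ : Set VL) ⊆ S ∧ insert w τ ∈ L.faces ∧
        τ.image f' = ρ} with hAdef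
    have hAsub : A ⊆ X.induced (UF : Set V) := by
      rintro ρ ⟨τ, hτ1, hτ2, hτ3, rfl⟩
      rw [hUFcoe]
      exact (hface' τ hτ2).mp ⟨hτ1, hτ2⟩
    have hAdc : DownClosed A := by
      rintro ρ ⟨τ, hτ1, hτ2, hτ3, rfl⟩ ρ' hsub hρne
      set τ' := τ.filter (fun x => f' x ∈ ρ') with hτ'def
      have himg : τ'.image f' = ρ' := by
        ext y
        simp only [Finset.mem_image, Finset.mem_filter, hτ'def]
        constructor
        · rintro ⟨x, ⟨hx, hy⟩, rfl⟩; exact hy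
        · intro hy
          obtain ⟨x, hx, rfl⟩ := Finset.mem_image.mp (hsub hy)
          exact ⟨x, ⟨hx, hy⟩, rfl⟩
      have hτ'ne : τ'.Nonempty := by
        rcases hρne with ⟨y, hy⟩
        rw [← himg] at hy
        obtain ⟨x, hx, -⟩ := Finset.mem_image.mp hy
        exact ⟨x, hx⟩
      have hτ'sub : τ' ⊆ τ := Finset.filter_subset _ _
      exact ⟨τ', L.down_closed hτ1 hτ'sub hτ'ne,
        (Finset.coe_subset.mpr hτ'sub).trans hτ2,
        L.down_closed hτ3 (Finset.insert_subset_insert _ hτ'sub)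
          ⟨w, Finset.mem_insert_self _ _⟩, himg⟩
    obtain ⟨v, hvX, hvUF, hlink⟩ :=
      hamp UF (by rw [hUFcoe]; exact hU'v) (by omega) A hAsub hAdc
    rw [hUFcoe] at hlink
    have hvU' : v ∉ U' := fun h => hvUF (by rw [← hUFcoe] at h; exact_mod_cast h)
    set f'' := Function.update f' w v with hf''def
    have hf''w : f'' w = v := Function.update_self _ _ _
    have hf''eq : ∀ x ∈ S, f'' x = f' x := fun x hx =>
      Function.update_of_ne (by rintro rfl; exact hwS hx) _ _
    have himg_eq : ∀ τ : Finset VL, (τ : Set VL) ⊆ S → τ.image f'' = τ.image f' := by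
      intro τ hτ
      exact Finset.image_congr (fun x hx => hf''eq x (hτ hx))
    have hmapsto : ∀ τ : Finset VL, (τ : Set VL) ⊆ S →
        ((τ.image f' : Finset V) : Set V) ⊆ U' := by
      intro τ hτ y hy
      obtain ⟨x, hx, rfl⟩ := Finset.mem_image.mp hy
      exact hbij.mapsTo (hτ hx)
    have hfaces2 : ∀ σ : Finset VL, (σ : Set VL) ⊆ insert w S →
        (σ ∈ L.faces ↔ σ.image f'' ∈ X.faces) := by
      intro σ hσ
      by_cases hwσ : w ∈ σ
      · set τ := σ.erase w with hτdef
        have hτS : (τ : Set VL) ⊆ S := by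
          intro x hx
          have hx' : x ∈ τ := hx
          have hxw : x ≠ w := (Finset.mem_erase.mp hx').1
          rcases hσ (Finset.mem_coe.mpr (Finset.erase_subset _ _ hx')) with h | h
          · exact absurd h hxw
          · exact h
        have hστ : σ = insert w τ := (Finset.insert_erase hwσ).symm
        have himgσ : σ.image f'' = insert v (τ.image f') := by
          conv_lhs => rw [hστ]
          rw [Finset.image_insert, hf''w, himg_eq τ hτS]
        by_cases hτne : τ.Nonempty
        · constructor
          · intro hσL
            have hτL : τ ∈ L.faces := L.down_closed hσL (Finset.erase_subset _ _) hτne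
            have hinsL : insert w τ ∈ L.faces := hστ ▸ hσL
            have hρA : τ.image f' ∈ A := ⟨τ, hτL, hτS, hinsL, rfl⟩
            rw [← hlink] at hρA
            rw [himgσ]
            exact hρA.1.2.2
          · intro hXf
            rw [himgσ] at hXf
            have hρU' : ((τ.image f' : Finset V) : Set V) ⊆ U' := hmapsto τ hτS
            have hρX : τ.image f' ∈ X.faces :=
              X.down_closed hXf (Finset.subset_insert _ _) (hτne.image _)
            have hvρ : v ∉ τ.image f' := fun h => hvU' (hρU' h)
            have hρA : τ.image f' ∈ A := by
              rw [← hlink]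
              exact ⟨⟨hρX, hvρ, hXf⟩, hρX, hρU'⟩
            obtain ⟨τ₀, hτ₀1, hτ₀2, hτ₀3, hτ₀4⟩ := hρA
            have hτ₀τ : τ₀ = τ := finset_image_injOn_eq hbij.injOn hτ₀2 hτS hτ₀4
            rw [hστ, ← hτ₀τ]
            exact hτ₀3
        · have hσw : σ = {w} := by
            rw [Finset.not_nonempty_iff_eq_empty] at hτne
            rw [hστ, hτne]
            simp
          rw [hσw, Finset.image_singleton, hf''w]
          exact ⟨fun _ => hvX, fun _ => hwL⟩
      · have hσS : (σ : Set VL) ⊆ S := fun x hx =>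
          ((hσ hx).resolve_left (fun h => hwσ (by rw [← h]; exact hx)))
        rw [himg_eq σ hσS]
        constructor
        · intro h
          exact ((hface' σ hσS).mp ⟨h, hσS⟩).1
        · intro h
          exact ((hface' σ hσS).mpr ⟨h, hmapsto σ hσS⟩).1
    have hS' : insert w S ⊆ L.verts := Set.insert_subset hwL hS
    have hU''fin : (insert v U' : Set V).Finite := hU'fin.insert v
    have hU''v : (insert v U' : Set V) ⊆ X.verts := Set.insert_subset hvX hU'v
    have hvertsS' : (L.inducedSub (insert w S)).verts = insert w S :=
      verts_inducedSub' L _ hS'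
    have hvertsU'' : (X.inducedSub (insert v U')).verts = insert v U' :=
      verts_inducedSub' X _ hU''v
    have hmapsto'' : Set.MapsTo f'' (insert w S) (insert v U') := by
      rintro x (rfl | hx)
      · rw [hf''w]; exact Set.mem_insert _ _
      · rw [hf''eq x hx]; exact Set.mem_insert_of_mem _ (hbij.mapsTo hx)
    have hIso'' : IsIso f'' (L.inducedSub (insert w S)) (X.inducedSub (insert v U')) := by
      constructor
      · rw [hvertsS', hvertsU'']
        refine ⟨hmapsto'', ?_, ?_⟩
        · rintro a (rfl | ha) b (rfl | hb) hab
          · rfl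
          · exfalso
            rw [hf''w, hf''eq b hb] at hab
            exact hvU' (hab ▸ hbij.mapsTo hb)
          · exfalso
            rw [hf''w, hf''eq a ha] at hab
            exact hvU' (hab ▸ hbij.mapsTo ha)
          · rw [hf''eq a ha, hf''eq b hb] at hab
            exact hbij.injOn ha hb hab
        · rintro y (rfl | hy)
          · exact ⟨w, Set.mem_insert _ _, hf''w⟩
          · obtain ⟨x, hx, rfl⟩ := hbij.surjOn hy
            exact ⟨x, Set.mem_insert_of_mem _ hx, hf''eq x hx⟩
      · intro σ hσ
        rw [hvertsS'] at hσ
        rw [mem_inducedSub', mem_inducedSub']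
        constructor
        · intro h
          refine ⟨(hfaces2 σ hσ).mp h.1, ?_⟩
          intro y hy
          obtain ⟨x, hx, rfl⟩ := Finset.mem_image.mp hy
          exact hmapsto'' (hσ hx)
        · intro h
          exact ⟨(hfaces2 σ hσ).mpr h.1, hσ⟩
    have hcard' : (L.verts \ insert w S).ncard ≤ n := by
      have heq : L.verts \ insert w S = (L.verts \ S) \ {w} := by
        ext x
        simp only [Set.mem_diff, Set.mem_insert_iff, Set.mem_singleton_iff]
        tauto
      have hlt : ((L.verts \ S) \ {w}).ncard < (L.verts \ S).ncard :=
        Set.ncard_diff_singleton_lt_of_mem hw hfinDiff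
      rw [heq]
      omega
    obtain ⟨U, hUfin, hU''U, hUv, f, hfIso, hEq⟩ :=
      ih (insert w S) hS' (insert v U') hU''fin hU''v f'' hIso'' hcard'
    refine ⟨U, hUfin, (Set.subset_insert _ _).trans hU''U, hUv, f, hfIso, ?_⟩
    rw [hvertsS]
    intro x hx
    rw [hvertsS'] at hEq
    rw [hEq (Set.mem_insert_of_mem _ hx)]
    exact hf''eq x hx
end

section
/- The Rado complex is universal: if R is an ∞-ample simplicial complex with countably infinite vertex set, then every simplicial complex X with countable vertex set is isomorphic to an induced subcomplex of R. -/
open SComplex in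
private lemma radoExistsSeq {α : Type*} (P : ℕ → α → Prop) (Q : ℕ → α → α → Prop)
    (h0 : ∃ a, P 0 a) (hstep : ∀ n a, P n a → ∃ b, P (n + 1) b ∧ Q n a b) :
    ∃ F : ℕ → α, ∀ n, P n (F n) ∧ Q n (F n) (F (n + 1)) := by
  obtain ⟨f0, hf0⟩ := h0
  choose! g hg1 hg2 using hstep
  refine ⟨fun n => Nat.rec (motive := fun _ => α) f0 (fun n a => g n a) n, fun n => ?_⟩
  have hP : ∀ n, P n (Nat.rec (motive := fun _ => α) f0 (fun n a => g n a) n) := by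
    intro n
    induction n with
    | zero => exact hf0
    | succ n ih => exact hg1 n _ ih
  exact ⟨hP n, hg2 n _ (hP n)⟩

open SComplex in
/-- The invariant carried along the construction: `f` is injective on `W`, maps `W`
into the vertexes of `R`, and is a simplexwise embedding on `W`. -/
private def RadoPred {VR VX : Type} [DecidableEq VR] (R : SComplex VR) (X : SComplex VX)
    (W : Finset VX) (f : VX → VR) : Prop :=
  Set.InjOn f ↑W ∧ (∀ x ∈ W, f x ∈ R.verts) ∧
    ∀ σ : Finset VX, σ ⊆ W → (σ ∈ X.faces ↔ σ.image f ∈ R.faces)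

open SComplex in
private lemma radoExtendStep {VR VX : Type} [DecidableEq VR] [DecidableEq VX]
    (R : SComplex VR) (hR : ∀ r : ℕ, 1 ≤ r → R.Ample r)
    (X : SComplex VX) (W : Finset VX) (w : VX) (hw : w ∈ X.verts)
    (f : VX → VR) (hf : RadoPred R X W f) :
    ∃ g : VX → VR, RadoPred R X (insert w W) g ∧ ∀ x ∈ W, g x = f x := by
  classical
  obtain ⟨hinj, hv, hface⟩ := hf
  by_cases hwW : w ∈ W
  · refine ⟨f, ?_, fun _ _ => rfl⟩
    rw [Finset.insert_eq_self.mpr hwW]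
    exact ⟨hinj, hv, hface⟩
  set U : Finset VR := W.image f with hUdef
  set A : Set (Finset VR) :=
    {τ | ∃ σ : Finset VX, σ ⊆ W ∧ σ.Nonempty ∧ insert w σ ∈ X.faces ∧ τ = σ.image f}
    with hAdef
  have hUsub : (U : Set VR) ⊆ R.verts := by
    intro y hy
    rw [hUdef] at hy
    simp only [Finset.coe_image, Set.mem_image, Finset.mem_coe] at hy
    obtain ⟨x, hx, rfl⟩ := hy
    exact hv x hx
  have hAsub : A ⊆ R.induced (U : Set VR) := by
    rintro τ ⟨σ, hσW, hσne, hσf, rfl⟩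
    refine ⟨(hface σ hσW).mp (X.down_closed hσf (Finset.subset_insert _ _) hσne), ?_⟩
    rw [hUdef]
    exact Finset.coe_subset.mpr (Finset.image_subset_image hσW)
  have hAdc : DownClosed A := by
    rintro τ ⟨σ, hσW, hσne, hσf, rfl⟩ ρ hρ hρne
    refine ⟨σ.filter (fun x => f x ∈ ρ), (Finset.filter_subset _ _).trans hσW, ?_, ?_, ?_⟩
    · obtain ⟨y, hy⟩ := hρne
      obtain ⟨x, hx, rfl⟩ := Finset.mem_image.mp (hρ hy)
      exact ⟨x, Finset.mem_filter.mpr ⟨hx, hy⟩⟩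
    · exact X.down_closed hσf (Finset.insert_subset_insert _ (Finset.filter_subset _ _))
        (Finset.insert_nonempty _ _)
    · refine (Finset.Subset.antisymm ?_ ?_).symm
      · intro y hy
        obtain ⟨x, hx, rfl⟩ := Finset.mem_image.mp hy
        exact (Finset.mem_filter.mp hx).2
      · intro y hy
        obtain ⟨x, hx, rfl⟩ := Finset.mem_image.mp (hρ hy)
        exact Finset.mem_image_of_mem f (Finset.mem_filter.mpr ⟨hx, hy⟩)
  obtain ⟨v, hvR, hvU, hlink⟩ :=
    (hR (U.card + 1) (Nat.le_add_left 1 _)).2 U hUsub (Nat.le_succ _) A hAsub hAdc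
  have hvne : ∀ x ∈ W, v ≠ f x := by
    intro x hx h
    refine hvU ?_
    rw [hUdef, h]
    exact Finset.mem_image_of_mem f hx
  have hgW : ∀ x ∈ W, Function.update f w v x = f x := by
    intro x hx
    refine Function.update_of_ne ?_ v f
    rintro rfl
    exact hwW hx
  have hginj : Set.InjOn (Function.update f w v) ↑(insert w W) := by
    intro x hx y hy hxy
    rw [Finset.coe_insert, Set.mem_insert_iff] at hx hy
    rcases hx with rfl | hx <;> rcases hy with rfl | hy
    · rfl
    · exfalso
      rw [Function.update_self, hgW y (Finset.mem_coe.mp hy)] at hxy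
      exact hvne y (Finset.mem_coe.mp hy) hxy
    · exfalso
      rw [Function.update_self, hgW x (Finset.mem_coe.mp hx)] at hxy
      exact hvne x (Finset.mem_coe.mp hx) hxy.symm
    · rw [hgW x (Finset.mem_coe.mp hx), hgW y (Finset.mem_coe.mp hy)] at hxy
      exact hinj hx hy hxy
  have hgv : ∀ x ∈ insert w W, Function.update f w v x ∈ R.verts := by
    intro x hx
    rcases Finset.mem_insert.mp hx with rfl | hx
    · rw [Function.update_self]; exact hvR
    · rw [hgW x hx]; exact hv x hx
  have hgface : ∀ σ : Finset VX, σ ⊆ insert w W →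
      (σ ∈ X.faces ↔ σ.image (Function.update f w v) ∈ R.faces) := by
    intro σ hσ
    by_cases hwσ : w ∈ σ
    · have hσ'W : σ.erase w ⊆ W := by
        intro x hx
        rcases Finset.mem_insert.mp (hσ (Finset.mem_of_mem_erase hx)) with h | h
        · exact absurd h (Finset.ne_of_mem_erase hx)
        · exact h
      have hσeq : insert w (σ.erase w) = σ := Finset.insert_erase hwσ
      have himg : σ.image (Function.update f w v) = insert v ((σ.erase w).image f) := by
        conv_lhs => rw [← hσeq]
        rw [Finset.image_insert, Function.update_self]
        congr 1
        exact Finset.image_congr fun x hx => hgW x (hσ'W hx)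
      rw [himg]
      rcases Finset.eq_empty_or_nonempty (σ.erase w) with hσ'e | hσ'ne
      · have hσw : σ = {w} := by
          rw [← hσeq, hσ'e]
          rfl
        rw [hσ'e, hσw]
        simp only [Finset.image_empty]
        exact iff_of_true hw hvR
      · constructor
        · intro hσX
          have hmem : (σ.erase w).image f ∈ A := by
            rw [hAdef]
            exact ⟨σ.erase w, hσ'W, hσ'ne, by rwa [hσeq], rfl⟩
          rw [← hlink] at hmem
          exact hmem.1.2.2
        · intro hnf
          have h1 : (σ.erase w).image f ∈ R.faces :=
            R.down_closed hnf (Finset.subset_insert _ _) (hσ'ne.image f)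
          have h2 : v ∉ (σ.erase w).image f := by
            intro hv'
            refine hvU ?_
            rw [hUdef]
            exact Finset.image_subset_image hσ'W hv'
          have hmem : (σ.erase w).image f ∈ R.link v ∩ R.induced ↑U := by
            refine ⟨⟨h1, h2, hnf⟩, h1, ?_⟩
            rw [hUdef]
            exact Finset.coe_subset.mpr (Finset.image_subset_image hσ'W)
          rw [hlink, hAdef] at hmem
          obtain ⟨σ₀, hσ₀W, hσ₀ne, hσ₀f, heq⟩ := hmem
          have hσ₀eq : σ₀ = σ.erase w := by
            refine Finset.Subset.antisymm ?_ ?_ <;> intro x hx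
            · have hfx : f x ∈ (σ.erase w).image f := by
                rw [heq]
                exact Finset.mem_image_of_mem f hx
              obtain ⟨y, hy, hxy⟩ := Finset.mem_image.mp hfx
              have hxy' : x = y := hinj (Finset.mem_coe.mpr (hσ₀W hx))
                (Finset.mem_coe.mpr (hσ'W hy)) hxy.symm
              rw [hxy']; exact hy
            · have hfx : f x ∈ σ₀.image f := by
                rw [← heq]
                exact Finset.mem_image_of_mem f hx
              obtain ⟨y, hy, hxy⟩ := Finset.mem_image.mp hfx
              have hxy' : x = y := hinj (Finset.mem_coe.mpr (hσ'W hx))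
                (Finset.mem_coe.mpr (hσ₀W hy)) hxy.symm
              rw [hxy']; exact hy
          rw [← hσeq, ← hσ₀eq]
          exact hσ₀f
    · have hσW : σ ⊆ W := by
        intro x hx
        rcases Finset.mem_insert.mp (hσ hx) with rfl | h
        · exact absurd hx hwσ
        · exact h
      have himg : σ.image (Function.update f w v) = σ.image f :=
        Finset.image_congr fun x hx => hgW x (hσW hx)
      rw [himg]
      exact hface σ hσW
  exact ⟨Function.update f w v, ⟨hginj, hgv, hgface⟩, hgW⟩

open SComplex in
/-- universality of the Rado complex: every simplicial complex with
countable vertex set is isomorphic to an induced subcomplex of an `∞`-ample complex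
with countably infinite vertex set. -/
theorem stmt13 {VR VX : Type} [DecidableEq VR]
    (R : SComplex VR) (hRc : R.verts.Countable) (hRi : R.verts.Infinite)
    (hR : ∀ r : ℕ, 1 ≤ r → R.Ample r)
    (X : SComplex VX) (hXc : X.verts.Countable) :
    ∃ S : Set VR, S ⊆ R.verts ∧ ∃ f : VX → VR, IsIso f X (R.inducedSub S) := by
  classical
  rcases Set.eq_empty_or_nonempty X.verts with hXe | hXne
  · refine ⟨∅, Set.empty_subset _, fun _ => hRi.nonempty.choose, ?_, ?_⟩
    · have hre : (R.inducedSub ∅).verts = ∅ := by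
        ext u
        simp only [SComplex.verts, SComplex.inducedSub, SComplex.induced, Set.mem_setOf_eq,
          Finset.coe_singleton, Set.subset_empty_iff, Set.singleton_ne_empty, and_false,
          Set.mem_empty_iff_false]
      rw [hXe, hre]
      exact ⟨Set.mapsTo_empty _ _, Set.injOn_empty _, Set.surjOn_empty _ _⟩
    · intro σ hσ
      rw [hXe, Set.subset_empty_iff, Finset.coe_eq_empty] at hσ
      subst hσ
      simp only [Finset.image_empty]
      exact iff_of_false (fun h => (X.nonempty_of_mem h).ne_empty rfl)
        (fun h => ((R.inducedSub ∅).nonempty_of_mem h).ne_empty rfl)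
  · obtain ⟨e, he⟩ := hXc.exists_eq_range hXne
    have heV : ∀ n, e n ∈ X.verts := fun n => he ▸ Set.mem_range_self n
    have hmonoW : ∀ {m n : ℕ}, m ≤ n →
        (Finset.range m).image e ⊆ (Finset.range n).image e :=
      fun h => Finset.image_subset_image (Finset.range_subset_range.mpr h)
    have h0 : ∃ a : VX → VR, RadoPred R X ((Finset.range 0).image e) a := by
      refine ⟨fun _ => hRi.nonempty.choose, ?_⟩
      rw [show (Finset.range 0).image e = ∅ by simp]
      refine ⟨by simp, by simp, ?_⟩
      intro σ hσ
      rw [Finset.subset_empty] at hσ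
      subst hσ
      simp only [Finset.image_empty]
      exact iff_of_false (fun h => (X.nonempty_of_mem h).ne_empty rfl)
        (fun h => (R.nonempty_of_mem h).ne_empty rfl)
    have hstep : ∀ n (a : VX → VR), RadoPred R X ((Finset.range n).image e) a →
        ∃ b, RadoPred R X ((Finset.range (n + 1)).image e) b ∧
          ∀ x ∈ (Finset.range n).image e, b x = a x := by
      intro n a ha
      have hW : (Finset.range (n + 1)).image e = insert (e n) ((Finset.range n).image e) := by
        rw [Finset.range_add_one, Finset.image_insert]
      rw [hW]
      exact radoExtendStep R hR X _ (e n) (heV n) a ha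
    obtain ⟨F, hF⟩ := radoExistsSeq (fun n f => RadoPred R X ((Finset.range n).image e) f)
      (fun n f g => ∀ x ∈ (Finset.range n).image e, g x = f x) h0 hstep
    have hFP : ∀ n, RadoPred R X ((Finset.range n).image e) (F n) := fun n => (hF n).1
    have hFQ : ∀ n, ∀ x ∈ (Finset.range n).image e, F (n + 1) x = F n x := fun n => (hF n).2
    have hagree : ∀ m n, m ≤ n → ∀ x ∈ (Finset.range m).image e, F n x = F m x := by
      intro m n h
      induction n, h using Nat.le_induction with
      | base => intro x _; rfl
      | succ n hmn ih =>
        intro x hx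
        rw [hFQ n x (hmonoW hmn hx), ih x hx]
    have hidx : ∀ x ∈ X.verts, ∃ n, x ∈ (Finset.range n).image e := by
      intro x hx
      rw [he] at hx
      obtain ⟨n, rfl⟩ := hx
      exact ⟨n + 1, Finset.mem_image.mpr ⟨n, Finset.mem_range.mpr (Nat.lt_succ_self n), rfl⟩⟩
    choose! N hN using hidx
    set f : VX → VR := fun x => F (N x) x with hfdef
    have hstab : ∀ x ∈ X.verts, ∀ n, x ∈ (Finset.range n).image e → f x = F n x := by
      intro x hx n hxn
      have h1 : F (max (N x) n) x = F (N x) x :=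
        hagree _ _ (le_max_left _ _) x (hN x hx)
      have h2 : F (max (N x) n) x = F n x := hagree _ _ (le_max_right _ _) x hxn
      show F (N x) x = F n x
      rw [← h1, h2]
    have hSR : f '' X.verts ⊆ R.verts := by
      rintro y ⟨x, hx, rfl⟩
      rw [hstab x hx (N x) (hN x hx)]
      exact (hFP (N x)).2.1 x (hN x hx)
    have hfin : ∀ σ : Finset VX, (σ : Set VX) ⊆ X.verts →
        ∃ n, σ ⊆ (Finset.range n).image e ∧ ∀ x ∈ σ, f x = F n x := by
      intro σ hσ
      refine ⟨σ.sup N, fun x hx => hmonoW (Finset.le_sup hx) (hN x (hσ hx)), fun x hx => ?_⟩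
      exact hstab x (hσ hx) _ (hmonoW (Finset.le_sup hx) (hN x (hσ hx)))
    refine ⟨f '' X.verts, hSR, f, ?_, ?_⟩
    · have hSv : (R.inducedSub (f '' X.verts)).verts = f '' X.verts := by
        ext u
        constructor
        · rintro ⟨h1, h2⟩
          exact h2 (Finset.mem_coe.mpr (Finset.mem_singleton_self u))
        · rintro ⟨x, hx, rfl⟩
          refine ⟨hSR ⟨x, hx, rfl⟩, ?_⟩
          rw [Finset.coe_singleton, Set.singleton_subset_iff]
          exact ⟨x, hx, rfl⟩
      rw [hSv]
      refine ⟨fun x hx => ⟨x, hx, rfl⟩, ?_, Set.surjOn_image f X.verts⟩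
      intro x hx y hy hxy
      have hx' := hN x hx
      have hy' := hN y hy
      have h1 : f x = F (max (N x) (N y)) x :=
        hstab x hx _ (hmonoW (le_max_left _ _) hx')
      have h2 : f y = F (max (N x) (N y)) y :=
        hstab y hy _ (hmonoW (le_max_right _ _) hy')
      refine (hFP (max (N x) (N y))).1
        (Finset.mem_coe.mpr (hmonoW (le_max_left _ _) hx'))
        (Finset.mem_coe.mpr (hmonoW (le_max_right _ _) hy')) ?_
      rw [← h1, ← h2]
      exact hxy
    · intro σ hσ
      obtain ⟨n, hσn, hfx⟩ := hfin σ hσ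
      have himg : σ.image f = σ.image (F n) :=
        Finset.image_congr fun x hx => hfx x (Finset.mem_coe.mp hx)
      rw [himg]
      constructor
      · intro h
        refine ⟨((hFP n).2.2 σ hσn).mp h, ?_⟩
        intro y hy
        simp only [Finset.coe_image, Set.mem_image, Finset.mem_coe] at hy
        obtain ⟨x, hx, rfl⟩ := hy
        exact ⟨x, hσ (Finset.mem_coe.mpr hx), hfx x hx⟩
      · rintro ⟨h1, _⟩
        exact ((hFP n).2.2 σ hσn).mpr h1
end
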